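/- arXiv:1708.05488 — 8 statements merged into one kernel-verified Lean document; each statement's English description precedes it below -/
import Mathlib

section
/- If m is odd and a graph G is (2m,m)-choosable, then G is (2,1)-choosable (i.e., 2-choosable in the usual list-coloring sense). -/
/-- `G` is `(a,b)`-choosable: from every assignment of `a`-element lists one can choose
`b`-element subsets with adjacent vertices receiving disjoint subsets. -/
def FoldChoosable {V : Type*} (G : SimpleGraph V) (a b : ℕ) : Prop :=
  ∀ L : V → Finset ℕ, (∀ v, (L v).card = a) →
    ∃ φ : V → Finset ℕ, (∀ v, φ v ⊆ L v) ∧ (∀ v, (φ v).card = b) ∧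
      ∀ v w, G.Adj v w → Disjoint (φ v) (φ w)

/-- If `m` is odd and `G` is `(2m,m)`-choosable, then `G` is `(2,1)`-choosable. -/
theorem stmt_3 {V : Type*} (G : SimpleGraph V) (m : ℕ) (hm : Odd m)
    (h : FoldChoosable G (2 * m) m) : FoldChoosable G 2 1 := by
  classical
  intro L hL
  set P : ℕ → Finset ℕ := fun α => (Finset.range m).image (Nat.pair α) with hP
  have hPcard : ∀ α, (P α).card = m := by
    intro α
    rw [hP]
    rw [Finset.card_image_of_injective _
      (fun i j hij => by simpa using (Nat.pair_eq_pair.mp hij).2)]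
    simp
  have hPdisj : ∀ α β, α ≠ β → Disjoint (P α) (P β) := by
    intro α β hne
    simp only [hP, Finset.disjoint_left, Finset.mem_image, Finset.mem_range]
    rintro x ⟨i, hi, rfl⟩ ⟨j, hj, hij⟩
    exact hne (Nat.pair_eq_pair.mp hij.symm).1.symm.symm
  set L' : V → Finset ℕ := fun v => (L v).biUnion P with hL'
  have hL'card : ∀ v, (L' v).card = 2 * m := by
    intro v
    rw [hL', Finset.card_biUnion (fun α _ β _ hne => hPdisj α β hne)]
    rw [Finset.sum_congr rfl (fun α _ => hPcard α), Finset.sum_const, hL v]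
    ring
  obtain ⟨φ, hφsub, hφcard, hφdisj⟩ := h L' hL'card
  have key : ∀ v, ∃ α ∈ L v, m < 2 * ((φ v).filter (· ∈ P α)).card := by
    intro v
    obtain ⟨α, β, hne, hv⟩ := Finset.card_eq_two.mp (hL v)
    have hdisj : Disjoint ((φ v).filter (· ∈ P α)) ((φ v).filter (· ∈ P β)) := by
      refine Finset.disjoint_left.mpr fun x hx hx' => ?_
      simp only [Finset.mem_filter] at hx hx'
      exact Finset.disjoint_left.mp (hPdisj α β hne) hx.2 hx'.2
    have hunion : ((φ v).filter (· ∈ P α)) ∪ ((φ v).filter (· ∈ P β)) = φ v := by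
      ext x
      simp only [Finset.mem_union, Finset.mem_filter]
      constructor
      · rintro (⟨hx, _⟩ | ⟨hx, _⟩) <;> exact hx
      · intro hx
        have := hφsub v hx
        simp only [hL'] at this; rw [hv] at this
        simp only [Finset.mem_biUnion, Finset.mem_insert, Finset.mem_singleton] at this
        obtain ⟨γ, hγ | hγ, hxγ⟩ := this <;> subst hγ
        · exact Or.inl ⟨hx, hxγ⟩
        · exact Or.inr ⟨hx, hxγ⟩
    have hsum : ((φ v).filter (· ∈ P α)).card + ((φ v).filter (· ∈ P β)).card = m := by
      rw [← Finset.card_union_of_disjoint hdisj, hunion, hφcard]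
    have hodd : ((φ v).filter (· ∈ P α)).card ≠ ((φ v).filter (· ∈ P β)).card := by
      intro heq
      obtain ⟨k, hk⟩ := hm
      omega
    rcases lt_or_gt_of_ne hodd with hlt | hgt
    · exact ⟨β, by simp [hv], by omega⟩
    · exact ⟨α, by simp [hv], by omega⟩
  choose c hcmem hcmaj using key
  refine ⟨fun v => {c v}, fun v => by simpa using hcmem v, fun v => by simp, ?_⟩
  intro v w hvw
  rw [Finset.disjoint_singleton]
  intro hcc
  have hA : ((φ v).filter (· ∈ P (c v))) ⊆ P (c v) := fun x hx =>
    (Finset.mem_filter.mp hx).2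
  have hB : ((φ w).filter (· ∈ P (c v))) ⊆ P (c v) := fun x hx =>
    (Finset.mem_filter.mp hx).2
  have hABdisj : Disjoint ((φ v).filter (· ∈ P (c v))) ((φ w).filter (· ∈ P (c v))) :=
    Finset.disjoint_filter_filter (hφdisj v w hvw)
  have hcardle : ((φ v).filter (· ∈ P (c v))).card + ((φ w).filter (· ∈ P (c v))).card ≤ m := by
    rw [← Finset.card_union_of_disjoint hABdisj]
    calc _ ≤ (P (c v)).card := Finset.card_le_card (Finset.union_subset hA hB)
    _ = m := hPcard _
  have h1 := hcmaj v
  have h2 := hcmaj w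
  rw [← hcc] at h2
  omega
end

section
/- (Strong Minor Lemma, single step.) Let G be a graph, v ∈ V(G), and let G' be obtained from G by deleting v and identifying all neighbors of v into a single vertex. If G' is not (2m,m)-choosable, then G is not (2m,m)-choosable. -/
/-- The graph obtained from `G` by deleting `v` and identifying all of its neighbors
into the single new vertex `none`. -/
def identifyNeighbors {V : Type*} (G : SimpleGraph V) (v : V) :
    SimpleGraph (Option {u : V // u ≠ v ∧ ¬ G.Adj v u}) :=
  SimpleGraph.fromRel (fun x y =>
    match x, y with
    | some a, some b => G.Adj a.1 b.1
    | none, some b => ∃ n, G.Adj v n ∧ G.Adj n b.1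
    | _, _ => False)

/-- Strong Minor Lemma, single step: if the graph obtained by deleting `v` and
identifying its neighbors is not `(2m,m)`-choosable, then neither is `G`. -/
theorem stmt_6 {V : Type*} (G : SimpleGraph V) (v : V) (m : ℕ) (hm : 0 < m)
    (h : ¬ FoldChoosable (identifyNeighbors G v) (2 * m) m) :
    ¬ FoldChoosable G (2 * m) m := by
  intro hG
  apply h
  intro L' hL'
  classical
  set L : V → Finset ℕ := fun u =>
    if hu : u = v ∨ G.Adj v u then L' none
    else L' (some ⟨u, by push_neg at hu; exact hu⟩) with hLdef
  have hLcard : ∀ u, (L u).card = 2 * m := by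
    intro u
    by_cases hu : u = v ∨ G.Adj v u <;> simp [L, hu, hL']
  obtain ⟨φ, hsub, hcard, hdisj⟩ := hG L hLcard
  have hLv : L v = L' none := by simp [L]
  have hφv : φ v ⊆ L' none := hLv ▸ hsub v
  have hdiffcard : (L' none \ φ v).card = m := by
    rw [Finset.card_sdiff_of_subset hφv, hL', hcard]; omega
  -- every neighbor of v is colored exactly L' none \ φ v
  have hnbr : ∀ n, G.Adj v n → φ n = L' none \ φ v := by
    intro n hn
    have hLn : L n = L' none := by simp [L, hn]
    have h1 : φ n ⊆ L' none \ φ v := by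
      intro x hx
      rw [Finset.mem_sdiff]
      refine ⟨hLn ▸ hsub n hx, ?_⟩
      exact fun hx' => (hdisj v n hn).forall_ne_finset hx' hx rfl
    exact Finset.eq_of_subset_of_card_le h1 (by rw [hdiffcard, hcard n])
  refine ⟨fun x => match x with
    | none => L' none \ φ v
    | some a => φ a.1, ?_, ?_, ?_⟩
  · rintro (_ | a)
    · exact Finset.sdiff_subset
    · have ha := a.2
      have : L a.1 = L' (some a) := by
        have : ¬ (a.1 = v ∨ G.Adj v a.1) := by push_neg; exact ha
        simp only [L, dif_neg this]
      exact this ▸ hsub a.1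
  · rintro (_ | a)
    · exact hdiffcard
    · exact hcard a.1
  · rintro (_ | a) (_ | b) hab <;>
      simp only [identifyNeighbors, SimpleGraph.fromRel_adj] at hab
    · exact absurd rfl hab.1
    · rcases hab.2 with ⟨n, hvn, hnb⟩ | hfalse
      · have := hnbr n hvn ▸ hdisj n b.1 hnb
        exact this
      · exact hfalse.elim
    · rcases hab.2 with hfalse | ⟨n, hvn, hna⟩
      · exact hfalse.elim
      · exact (hnbr n hvn ▸ hdisj n a.1 hna).symm
    · rcases hab.2 with hab | hab
      · exact hdisj a.1 b.1 hab
      · exact (hdisj b.1 a.1 hab).symm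
end

section
/- On a 4-cycle v1v2v3v4 with lists L(v1)=L(v2)={1,...,2m}, L(v3)={2,...,2m+1}, L(v4)={1,...,2m−1,2m+1}, there is no m-fold L-coloring φ with φ(v1)={1,...,m}. -/
/-- On the 4-cycle `v1v2v3v4` with lists `L(v1)=L(v2)={1,…,2m}`, `L(v3)={2,…,2m+1}`,
`L(v4)={1,…,2m−1}∪{2m+1}`, there is no `m`-fold `L`-coloring with `φ(v1)={1,…,m}`. -/
theorem stmt_8 (m : ℕ) (hm : 0 < m) :
    ¬ ∃ φ1 φ2 φ3 φ4 : Finset ℕ,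
        φ1 = Finset.Icc 1 m ∧
        φ1 ⊆ Finset.Icc 1 (2 * m) ∧ φ1.card = m ∧
        φ2 ⊆ Finset.Icc 1 (2 * m) ∧ φ2.card = m ∧
        φ3 ⊆ Finset.Icc 2 (2 * m + 1) ∧ φ3.card = m ∧
        φ4 ⊆ insert (2 * m + 1) (Finset.Icc 1 (2 * m - 1)) ∧ φ4.card = m ∧
        Disjoint φ1 φ2 ∧ Disjoint φ2 φ3 ∧ Disjoint φ3 φ4 ∧ Disjoint φ4 φ1 := by
  rintro ⟨φ1, φ2, φ3, φ4, h1, h1s, h1c, h2s, h2c, h3s, h3c, h4s, h4c, d12, d23, d34, d41⟩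
  subst h1
  -- φ2 = Icc (m+1) (2m)
  have hφ2sub : φ2 ⊆ Finset.Icc (m + 1) (2 * m) := by
    intro x hx
    have hx1 := h2s hx
    have hx2 : x ∉ Finset.Icc 1 m := Finset.disjoint_right.mp d12 hx
    simp only [Finset.mem_Icc] at *
    omega
  have hφ2 : φ2 = Finset.Icc (m + 1) (2 * m) := by
    apply Finset.eq_of_subset_of_card_le hφ2sub
    rw [Nat.card_Icc, h2c]; omega
  -- φ3 = insert (2m+1) (Icc 2 m)
  have hφ3sub : φ3 ⊆ insert (2 * m + 1) (Finset.Icc 2 m) := by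
    intro x hx
    have hx1 := h3s hx
    have hx2 : x ∉ φ2 := Finset.disjoint_right.mp d23 hx
    rw [hφ2] at hx2
    simp only [Finset.mem_Icc, Finset.mem_insert] at *
    omega
  have hφ3 : φ3 = insert (2 * m + 1) (Finset.Icc 2 m) := by
    apply Finset.eq_of_subset_of_card_le hφ3sub
    rw [Finset.card_insert_of_notMem (by simp [Finset.mem_Icc]; omega),
      Nat.card_Icc, h3c]; omega
  -- φ4 ⊆ Icc (m+1) (2m-1), which has m-1 elements
  have hφ4sub : φ4 ⊆ Finset.Icc (m + 1) (2 * m - 1) := by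
    intro x hx
    have hx1 := h4s hx
    have hx2 : x ∉ φ3 := Finset.disjoint_right.mp d34 hx
    have hx3 : x ∉ Finset.Icc 1 m := Finset.disjoint_left.mp d41 hx
    rw [hφ3] at hx2
    simp only [Finset.mem_Icc, Finset.mem_insert, not_or] at *
    omega
  have := Finset.card_le_card hφ4sub
  rw [Nat.card_Icc, h4c] at this
  omega
end

section
/- The 4-cycle with the list assignment L(v1)=L(v2)={1,2,3,4}, L(v3)={1,2,3,5}, L(v4)={2,3,4,5} (vertices in cyclic order v1,v2,v3,v4) admits no 2-fold L-coloring φ with φ(v1) ∈ {{2,4},{3,4}}. -/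
/-- The 4-cycle `v1v2v3v4` with lists `1234, 1234, 1235, 2345` admits no 2-fold
coloring with `φ(v1) ∈ {{2,4},{3,4}}` (so this assignment is `4_out`-forcing for `v1`). -/
theorem stmt_9 :
    ¬ ∃ φ1 φ2 φ3 φ4 : Finset ℕ,
        φ1 ⊆ ({1,2,3,4} : Finset ℕ) ∧ φ1.card = 2 ∧
        φ2 ⊆ ({1,2,3,4} : Finset ℕ) ∧ φ2.card = 2 ∧
        φ3 ⊆ ({1,2,3,5} : Finset ℕ) ∧ φ3.card = 2 ∧
        φ4 ⊆ ({2,3,4,5} : Finset ℕ) ∧ φ4.card = 2 ∧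
        Disjoint φ1 φ2 ∧ Disjoint φ2 φ3 ∧ Disjoint φ3 φ4 ∧ Disjoint φ4 φ1 ∧
        (φ1 = ({2,4} : Finset ℕ) ∨ φ1 = ({3,4} : Finset ℕ)) := by
  rintro ⟨φ1, φ2, φ3, φ4, h1s, h1c, h2s, h2c, h3s, h3c, h4s, h4c, d12, d23, d34, d41, hv⟩
  rcases hv with h | h <;> subst h
  · have hφ2 : φ2 = ({1,3} : Finset ℕ) := by
      apply Finset.eq_of_subset_of_card_le ?_ (by simp [h2c])
      intro x hx
      have hx1 := h2s hx
      have hx2 := Finset.disjoint_right.mp d12 hx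
      simp only [Finset.mem_insert, Finset.mem_singleton] at *
      omega
    subst hφ2
    have hφ3 : φ3 = ({2,5} : Finset ℕ) := by
      apply Finset.eq_of_subset_of_card_le ?_ (by simp [h3c])
      intro x hx
      have hx1 := h3s hx
      have hx2 := Finset.disjoint_right.mp d23 hx
      simp only [Finset.mem_insert, Finset.mem_singleton] at *
      omega
    subst hφ3
    have : φ4 ⊆ ({3} : Finset ℕ) := by
      intro x hx
      have hx1 := h4s hx
      have hx2 := Finset.disjoint_right.mp d34 hx
      have hx3 := Finset.disjoint_left.mp d41 hx
      simp only [Finset.mem_insert, Finset.mem_singleton] at *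
      omega
    have := Finset.card_le_card this
    simp [h4c] at this
  · have hφ2 : φ2 = ({1,2} : Finset ℕ) := by
      apply Finset.eq_of_subset_of_card_le ?_ (by simp [h2c])
      intro x hx
      have hx1 := h2s hx
      have hx2 := Finset.disjoint_right.mp d12 hx
      simp only [Finset.mem_insert, Finset.mem_singleton] at *
      omega
    subst hφ2
    have hφ3 : φ3 = ({3,5} : Finset ℕ) := by
      apply Finset.eq_of_subset_of_card_le ?_ (by simp [h3c])
      intro x hx
      have hx1 := h3s hx
      have hx2 := Finset.disjoint_right.mp d23 hx
      simp only [Finset.mem_insert, Finset.mem_singleton] at *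
      omega
    subst hφ3
    have : φ4 ⊆ ({2} : Finset ℕ) := by
      intro x hx
      have hx1 := h4s hx
      have hx2 := Finset.disjoint_right.mp d34 hx
      have hx3 := Finset.disjoint_left.mp d41 hx
      simp only [Finset.mem_insert, Finset.mem_singleton] at *
      omega
    have := Finset.card_le_card this
    simp [h4c] at this
end

section
/- The graph K_{2,3} with degree-3 vertices x and y (parts {x,y} and {p,q,r}), with lists L(p)={1,2,3,4}, L(q)={1,2,3,6}, L(r)={1,2,3,5}, L(x)={1,2,3,4}, L(y)={1,4,5,6}, satisfies: every 2-fold L-coloring φ has φ(x) ∉ {{1,2},{1,3},{2,3}}. -/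
lemma forced (f : Finset ℕ) (t : Finset ℕ) (h : f ⊆ t) (hc : f.card = 2)
    (ht : t.card ≤ 2) : f = t :=
  Finset.eq_of_subset_of_card_le h (by omega)

/-- `K_{2,3}` with degree-3 vertices `x, y` and degree-2 vertices `p, q, r`, with the
given lists: every 2-fold coloring has `φ(x) ∉ {{1,2},{1,3},{2,3}}`. -/
theorem stmt_12 (fx fy fp fq fr : Finset ℕ)
    (hx : fx ⊆ ({1,2,3,4} : Finset ℕ)) (hxc : fx.card = 2)
    (hy : fy ⊆ ({1,4,5,6} : Finset ℕ)) (hyc : fy.card = 2)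
    (hp : fp ⊆ ({1,2,3,4} : Finset ℕ)) (hpc : fp.card = 2)
    (hq : fq ⊆ ({1,2,3,6} : Finset ℕ)) (hqc : fq.card = 2)
    (hr : fr ⊆ ({1,2,3,5} : Finset ℕ)) (hrc : fr.card = 2)
    (h1 : Disjoint fx fp) (h2 : Disjoint fx fq) (h3 : Disjoint fx fr)
    (h4 : Disjoint fy fp) (h5 : Disjoint fy fq) (h6 : Disjoint fy fr) :
    fx ≠ ({1,2} : Finset ℕ) ∧ fx ≠ ({1,3} : Finset ℕ) ∧ fx ≠ ({2,3} : Finset ℕ) := by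
  have key : ∀ c : ℕ, c ∈ ({1,2,3} : Finset ℕ) → c ∉ fx →
      (∀ a, a ∈ ({1,2,3} : Finset ℕ) → a ≠ c → a ∈ fx) → False := by
    intro c hc hcx hmem
    have hpe : fp = {c, 4} := by
      refine forced _ _ ?_ hpc (by apply Finset.card_insert_le _ _ |>.trans; simp)
      · intro a ha
        have ha4 := hp ha
        have hax : a ∉ fx := Finset.disjoint_right.mp h1 ha
        simp only [Finset.mem_insert, Finset.mem_singleton] at *
        rcases ha4 with h|h|h|h
        · by_cases hac : a = c
          · exact Or.inl hac
          · exact absurd (hmem a (by simp [h]) hac) hax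
        · by_cases hac : a = c
          · exact Or.inl hac
          · exact absurd (hmem a (by simp [h]) hac) hax
        · by_cases hac : a = c
          · exact Or.inl hac
          · exact absurd (hmem a (by simp [h]) hac) hax
        · exact Or.inr h
    have hqe : fq = {c, 6} := by
      refine forced _ _ ?_ hqc (by apply Finset.card_insert_le _ _ |>.trans; simp)
      · intro a ha
        have ha4 := hq ha
        have hax : a ∉ fx := Finset.disjoint_right.mp h2 ha
        simp only [Finset.mem_insert, Finset.mem_singleton] at *
        rcases ha4 with h|h|h|h
        · by_cases hac : a = c
          · exact Or.inl hac
          · exact absurd (hmem a (by simp [h]) hac) hax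
        · by_cases hac : a = c
          · exact Or.inl hac
          · exact absurd (hmem a (by simp [h]) hac) hax
        · by_cases hac : a = c
          · exact Or.inl hac
          · exact absurd (hmem a (by simp [h]) hac) hax
        · exact Or.inr h
    have hre : fr = {c, 5} := by
      refine forced _ _ ?_ hrc (by apply Finset.card_insert_le _ _ |>.trans; simp)
      · intro a ha
        have ha4 := hr ha
        have hax : a ∉ fx := Finset.disjoint_right.mp h3 ha
        simp only [Finset.mem_insert, Finset.mem_singleton] at *
        rcases ha4 with h|h|h|h
        · by_cases hac : a = c
          · exact Or.inl hac
          · exact absurd (hmem a (by simp [h]) hac) hax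
        · by_cases hac : a = c
          · exact Or.inl hac
          · exact absurd (hmem a (by simp [h]) hac) hax
        · by_cases hac : a = c
          · exact Or.inl hac
          · exact absurd (hmem a (by simp [h]) hac) hax
        · exact Or.inr h
    have hy1 : fy ⊆ {1} := by
      intro a ha
      have ha4 := hy ha
      have hnp : a ∉ fp := Finset.disjoint_left.mp h4 ha
      have hnq : a ∉ fq := Finset.disjoint_left.mp h5 ha
      have hnr : a ∉ fr := Finset.disjoint_left.mp h6 ha
      rw [hpe] at hnp; rw [hqe] at hnq; rw [hre] at hnr
      simp only [Finset.mem_insert, Finset.mem_singleton] at *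
      push_neg at hnp hnq hnr
      rcases ha4 with h|h|h|h
      · exact h
      · exact absurd h hnp.2
      · exact absurd h hnr.2
      · exact absurd h hnq.2
    have := Finset.card_le_card hy1
    simp [hyc] at this
  refine ⟨?_, ?_, ?_⟩ <;> intro h <;> subst h
  · exact key 3 (by decide) (by decide) (by decide)
  · exact key 2 (by decide) (by decide) (by decide)
  · exact key 1 (by decide) (by decide) (by decide)
end

section
/- Let G be the 4-cycle and L any 4-list assignment. Then for every vertex v of G there exist at least four distinct 2-element subsets S ⊆ L(v) such that G has a 2-fold L-coloring φ with φ(v) = S. (Equivalently, no 4-assignment for C_4 is 3-forcing for any vertex.) -/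
/-- The 4-cycle on `Fin 4`, with edges `{i, i+1}`. -/
def C4 : SimpleGraph (Fin 4) := SimpleGraph.fromRel (fun i j => j = i + 1)

namespace Stmt16Aux

open Finset

/-! ### Boolean / decidable abstract core -/

def bt (x : Bool) : ℕ := cond x 1 0

def afB (k w : ℕ) (allu : Bool) (ai aj bi bj ui uj : Bool) : Bool :=
  decide (3 ≤ bt ai + bt aj + (bt bi + bt bj)) &&
  decide (k + w + (bt (ui && (ai || bi)) + bt (uj && (aj || bj))) ≤ 1) &&
  (!(decide (bt ai + bt aj = 1) || decide (bt bi + bt bj = 1)) ||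
    (decide (k = 0) && allu && !ui && !uj))

def chk (a0 a1 a2 a3 b0 b1 b2 b3 u0 u1 u2 u3 : Bool) (k : ℕ) : Bool :=
  let w := bt (u0 && !(a0 || b0)) + bt (u1 && !(a1 || b1)) + bt (u2 && !(a2 || b2)) +
    bt (u3 && !(a3 || b3))
  let allu := (!u0 || (a0 || b0)) && (!u1 || (a1 || b1)) && (!u2 || (a2 || b2)) &&
    (!u3 || (a3 || b3))
  !decide (bt a0 + bt a1 + bt a2 + bt a3 + (bt b0 + bt b1 + bt b2 + bt b3) ≤
      4 + (bt u0 + bt u1 + bt u2 + bt u3) + k) ||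
  decide ((afB k w allu a0 a1 b0 b1 u0 u1).toNat + (afB k w allu a0 a2 b0 b2 u0 u2).toNat +
    (afB k w allu a0 a3 b0 b3 u0 u3).toNat + (afB k w allu a1 a2 b1 b2 u1 u2).toNat +
    (afB k w allu a1 a3 b1 b3 u1 u3).toNat + (afB k w allu a2 a3 b2 b3 u2 u3).toNat ≤ 2)

set_option maxHeartbeats 4000000 in
lemma abs_all : ∀ (a0 a1 a2 a3 b0 b1 b2 b3 u0 u1 u2 u3 : Bool) (k : Fin 5),
    chk a0 a1 a2 a3 b0 b1 b2 b3 u0 u1 u2 u3 (k : ℕ) = true := by decide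

/-- table of the six ordered pairs -/
def P : Fin 6 → Fin 4 × Fin 4 := ![(0,1),(0,2),(0,3),(1,2),(1,3),(2,3)]

lemma slot_exists : ∀ p : Fin 4 × Fin 4, p.1 < p.2 → ∃ c : Fin 6, P c = p := by decide

lemma count_helper : ∀ (g0 g1 g2 g3 g4 g5 : Bool) (c1 c2 c3 : Fin 6), c1 ≠ c2 → c1 ≠ c3 →
    c2 ≠ c3 → ![g0,g1,g2,g3,g4,g5] c1 = true → ![g0,g1,g2,g3,g4,g5] c2 = true →
    ![g0,g1,g2,g3,g4,g5] c3 = true →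
    3 ≤ g0.toNat + g1.toNat + g2.toNat + g3.toNat + g4.toNat + g5.toNat := by decide

/-- the `w` quantity -/
def wsum (a b u : Fin 4 → Bool) : ℕ :=
  bt (u 0 && !(a 0 || b 0)) + bt (u 1 && !(a 1 || b 1)) + bt (u 2 && !(a 2 || b 2)) +
    bt (u 3 && !(a 3 || b 3))

def alluB (a b u : Fin 4 → Bool) : Bool :=
  (!u 0 || (a 0 || b 0)) && (!u 1 || (a 1 || b 1)) && (!u 2 || (a 2 || b 2)) &&
    (!u 3 || (a 3 || b 3))

/-- Prop-level version of `afB`. -/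
def AFailP (a b u : Fin 4 → Bool) (k : ℕ) (i j : Fin 4) : Prop :=
  3 ≤ bt (a i) + bt (a j) + (bt (b i) + bt (b j)) ∧
  k + wsum a b u + (bt (u i && (a i || b i)) + bt (u j && (a j || b j))) ≤ 1 ∧
  ((bt (a i) + bt (a j) = 1 ∨ bt (b i) + bt (b j) = 1) →
    k = 0 ∧ alluB a b u = true ∧ u i = false ∧ u j = false)

lemma afB_eq_true {a b u : Fin 4 → Bool} {k : ℕ} {i j : Fin 4} (h : AFailP a b u k i j) :
    afB k (wsum a b u) (alluB a b u) (a i) (a j) (b i) (b j) (u i) (u j) = true := by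
  obtain ⟨h1, h2, h3⟩ := h
  simp only [afB, Bool.and_eq_true, Bool.or_eq_true, Bool.not_eq_true', Bool.or_eq_false_iff,
    decide_eq_true_eq, decide_eq_false_iff_not]
  refine ⟨⟨h1, h2⟩, ?_⟩
  by_cases hd : bt (a i) + bt (a j) = 1 ∨ bt (b i) + bt (b j) = 1
  · obtain ⟨e1, e2, e3, e4⟩ := h3 hd
    exact Or.inr ⟨⟨⟨by simpa using e1, e2⟩, by simp [e3]⟩, by simp [e4]⟩
  · push_neg at hd
    exact Or.inl ⟨hd.1, hd.2⟩

/-- The abstract key fact: no three distinct ordered index pairs can all "fail". -/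
lemma abs_main (a b u : Fin 4 → Bool) (k : ℕ) (hk : k ≤ 4)
    (h2 : bt (a 0) + bt (a 1) + bt (a 2) + bt (a 3) +
        (bt (b 0) + bt (b 1) + bt (b 2) + bt (b 3)) ≤
        4 + (bt (u 0) + bt (u 1) + bt (u 2) + bt (u 3)) + k)
    (i1 j1 i2 j2 i3 j3 : Fin 4) (o1 : i1 < j1) (o2 : i2 < j2) (o3 : i3 < j3)
    (d12 : (i1, j1) ≠ (i2, j2)) (d13 : (i1, j1) ≠ (i3, j3)) (d23 : (i2, j2) ≠ (i3, j3))
    (f1 : AFailP a b u k i1 j1) (f2 : AFailP a b u k i2 j2) (f3 : AFailP a b u k i3 j3) :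
    False := by
  have hchk := abs_all (a 0) (a 1) (a 2) (a 3) (b 0) (b 1) (b 2) (b 3) (u 0) (u 1) (u 2) (u 3)
    ⟨k, by omega⟩
  simp only [chk, Fin.val_mk, Bool.or_eq_true, Bool.not_eq_true', decide_eq_false_iff_not,
    decide_eq_true_eq] at hchk
  set g : Fin 6 → Bool := fun c => afB k (wsum a b u) (alluB a b u)
    (a (P c).1) (a (P c).2) (b (P c).1) (b (P c).2) (u (P c).1) (u (P c).2) with hg
  rcases hchk with hbad | hcnt
  · exact hbad h2
  · have hcnt' : (g 0).toNat + (g 1).toNat + (g 2).toNat + (g 3).toNat + (g 4).toNat +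
        (g 5).toNat ≤ 2 := hcnt
    obtain ⟨c1, hc1⟩ := slot_exists (i1, j1) o1
    obtain ⟨c2, hc2⟩ := slot_exists (i2, j2) o2
    obtain ⟨c3, hc3⟩ := slot_exists (i3, j3) o3
    have hvec : ∀ c : Fin 6, ![g 0, g 1, g 2, g 3, g 4, g 5] c = g c := by
      intro c; fin_cases c <;> rfl
    have e1 : g c1 = true := by rw [hg]; simp only [hc1]; exact afB_eq_true f1
    have e2 : g c2 = true := by rw [hg]; simp only [hc2]; exact afB_eq_true f2
    have e3 : g c3 = true := by rw [hg]; simp only [hc3]; exact afB_eq_true f3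
    have n12 : c1 ≠ c2 := fun h => d12 (by rw [← hc1, ← hc2, h])
    have n13 : c1 ≠ c3 := fun h => d13 (by rw [← hc1, ← hc3, h])
    have n23 : c2 ≠ c3 := fun h => d23 (by rw [← hc2, ← hc3, h])
    have := count_helper (g 0) (g 1) (g 2) (g 3) (g 4) (g 5) c1 c2 c3 n12 n13 n23
      (by rw [hvec]; exact e1) (by rw [hvec]; exact e2) (by rw [hvec]; exact e3)
    omega

/-! ### Real side -/

/-- `s` is an achievable color set at the distinguished vertex. -/
def good (A U B s : Finset ℕ) : Prop :=
  ∃ t : Finset ℕ, t ⊆ U ∧ t.card = 2 ∧ 2 ≤ (A \ (s ∪ t)).card ∧ 2 ≤ (B \ (s ∪ t)).card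

lemma good_swap {A U B s : Finset ℕ} (h : good A U B s) : good B U A s := by
  obtain ⟨t, h1, h2, h3, h4⟩ := h; exact ⟨t, h1, h2, h4, h3⟩

lemma sdiff_two_le {A s t : Finset ℕ} (hA : A.card = 4)
    (h : (s ∩ A).card + (t ∩ (A \ s)).card ≤ 2) : 2 ≤ (A \ (s ∪ t)).card := by
  have hsub : A ∩ (s ∪ t) ⊆ (s ∩ A) ∪ (t ∩ (A \ s)) := by
    intro x hx
    simp only [mem_inter, mem_union, mem_sdiff] at *
    tauto
  have h1 : (A ∩ (s ∪ t)).card ≤ 2 :=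
    le_trans (card_le_card hsub) (le_trans (card_union_le _ _) h)
  have h2 : (A ∩ (s ∪ t)).card + (A \ (s ∪ t)).card = 4 := by
    rw [card_inter_add_card_sdiff, hA]
  omega

lemma good_of_pair {A U B s : Finset ℕ} (hA : A.card = 4) (hB : B.card = 4)
    {z z' : ℕ} (hz : z ∈ U) (hz' : z' ∈ U) (hne : z ≠ z')
    (ha : (s ∩ A).card + (({z, z'} : Finset ℕ) ∩ (A \ s)).card ≤ 2)
    (hb : (s ∩ B).card + (({z, z'} : Finset ℕ) ∩ (B \ s)).card ≤ 2) :
    good A U B s := by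
  refine ⟨{z, z'}, ?_, ?_, sdiff_two_le hA ha, sdiff_two_le hB hb⟩
  · intro x hx; rcases mem_insert.1 hx with rfl | hx
    · exact hz
    · rw [mem_singleton.1 hx]; exact hz'
  · rw [card_insert_of_notMem (by simpa using hne), card_singleton]

lemma pair_inter_le_one {z z' : ℕ} {W : Finset ℕ} (hz : z ∉ W) :
    (({z, z'} : Finset ℕ) ∩ W).card ≤ 1 := by
  have : ({z, z'} : Finset ℕ) ∩ W ⊆ {z'} := by
    intro x hx
    simp only [mem_inter, mem_insert, mem_singleton] at *
    rcases hx with ⟨rfl | rfl, hW⟩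
    · exact absurd hW hz
    · trivial
  simpa using card_le_card this

lemma pair_inter_eq_zero {z z' : ℕ} {W : Finset ℕ} (hz : z ∉ W) (hz' : z' ∉ W) :
    (({z, z'} : Finset ℕ) ∩ W).card = 0 := by
  rw [card_eq_zero, eq_empty_iff_forall_notMem]
  intro x hx
  simp only [mem_inter, mem_insert, mem_singleton] at hx
  rcases hx with ⟨rfl | rfl, hW⟩
  · exact hz hW
  · exact hz' hW

lemma inter_card_le_two {A s : Finset ℕ} (hs : s.card = 2) : (s ∩ A).card ≤ 2 :=
  hs ▸ card_le_card (inter_subset_left)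

/-- N3: if `s` fails, at most one element of `U` lies outside `(A ∪ B) \ s`. -/
lemma fail_N3 {V A U B s : Finset ℕ} (hA : A.card = 4) (hB : B.card = 4)
    (hs : s.card = 2) (h : ¬ good A U B s) : (U \ ((A ∪ B) \ s)).card ≤ 1 := by
  by_contra hc
  push_neg at hc
  obtain ⟨t, ht, htc⟩ := exists_subset_card_eq (n := 2) (by omega : 2 ≤ (U \ ((A ∪ B) \ s)).card)
  apply h
  refine ⟨t, ht.trans (sdiff_subset), htc, ?_, ?_⟩
  · apply sdiff_two_le hA
    have h0 : (t ∩ (A \ s)).card = 0 := by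
      rw [card_eq_zero, eq_empty_iff_forall_notMem]
      intro x hx
      rw [mem_inter, mem_sdiff] at hx
      have := ht hx.1
      rw [mem_sdiff, mem_sdiff, mem_union] at this
      exact this.2 ⟨Or.inl hx.2.1, hx.2.2⟩
    have := inter_card_le_two (A := A) hs
    omega
  · apply sdiff_two_le hB
    have h0 : (t ∩ (B \ s)).card = 0 := by
      rw [card_eq_zero, eq_empty_iff_forall_notMem]
      intro x hx
      rw [mem_inter, mem_sdiff] at hx
      have := ht hx.1
      rw [mem_sdiff, mem_sdiff, mem_union] at this
      exact this.2 ⟨Or.inr hx.2.1, hx.2.2⟩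
    have := inter_card_le_two (A := B) hs
    omega

lemma card_sdiff_lower {U W : Finset ℕ} (hU : U.card = 4) (hW : W.card ≤ 3) :
    ∃ z ∈ U, z ∉ W := by
  by_contra hc
  push_neg at hc
  have := card_le_card hc
  omega

/-- helper for the `b = 0` case of N1 -/
lemma good_of_inter_zero {A U B s : Finset ℕ} (hA : A.card = 4) (hB : B.card = 4)
    (hU : U.card = 4) (hs : s.card = 2) (hb : (s ∩ B).card = 0) (ha : (s ∩ A).card ≤ 2) :
    good A U B s := by
  set a := (s ∩ A).card with hadef
  have hAs : (A \ s).card = 4 - a := by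
    have := card_inter_add_card_sdiff A s
    rw [inter_comm] at this
    omega
  have hUA : a ≤ (U \ (A \ s)).card := by
    have h1 : U.card ≤ (U \ (A \ s)).card + (A \ s).card := by
      have := card_inter_add_card_sdiff U (A \ s)
      have h2 : (U ∩ (A \ s)).card ≤ (A \ s).card := card_le_card inter_subset_right
      omega
    omega
  obtain ⟨w, hw, hwc⟩ := exists_subset_card_eq hUA
  obtain ⟨t, hwt, htU, htc⟩ := exists_subsuperset_card_eq (hw.trans sdiff_subset)
    (by omega : w.card ≤ 2) (by omega : 2 ≤ U.card)
  refine ⟨t, htU, htc, sdiff_two_le hA ?_, sdiff_two_le hB ?_⟩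
  · have hsub : t ∩ (A \ s) ⊆ t \ w := by
      intro x hx
      rw [mem_inter] at hx
      rw [mem_sdiff]
      refine ⟨hx.1, fun hxw => ?_⟩
      have := hw hxw
      rw [mem_sdiff] at this
      exact this.2 hx.2
    have h1 : (t \ w).card = 2 - a := by rw [card_sdiff_of_subset hwt, htc, hwc]
    have := card_le_card hsub
    omega
  · have h1 : (t ∩ (B \ s)).card ≤ 2 := htc ▸ card_le_card inter_subset_left
    omega

/-- N1: if `s` fails then `|s∩A| + |s∩B| ≥ 3`. -/
lemma fail_N1 {V A U B s : Finset ℕ} (hA : A.card = 4) (hB : B.card = 4) (hU : U.card = 4)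
    (hs : s.card = 2) (h : ¬ good A U B s) : 3 ≤ (s ∩ A).card + (s ∩ B).card := by
  by_contra hc
  push_neg at hc
  have haa : (s ∩ A).card ≤ 2 := inter_card_le_two hs
  have hbb : (s ∩ B).card ≤ 2 := inter_card_le_two hs
  rcases Nat.eq_zero_or_pos (s ∩ B).card with hb0 | hb1
  · exact h (good_of_inter_zero hA hB hU hs hb0 haa)
  rcases Nat.eq_zero_or_pos (s ∩ A).card with ha0 | ha1
  · exact h (good_swap (good_of_inter_zero hB hA hU hs ha0 hbb))
  -- now both are 1
  have ha : (s ∩ A).card = 1 := by omega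
  have hb : (s ∩ B).card = 1 := by omega
  have hAs : (A \ s).card = 3 := by
    have := card_inter_add_card_sdiff A s
    rw [inter_comm] at this
    omega
  have hBs : (B \ s).card = 3 := by
    have := card_inter_add_card_sdiff B s
    rw [inter_comm] at this
    omega
  obtain ⟨z, hzU, hzA⟩ := card_sdiff_lower hU (by omega : (A \ s).card ≤ 3)
  obtain ⟨z', hz'U, hz'B⟩ := card_sdiff_lower hU (by omega : (B \ s).card ≤ 3)
  apply h
  by_cases hne : z = z'
  · subst hne
    obtain ⟨z'', hz''U, hz''⟩ := card_sdiff_lower hU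
      (by simp [hzU] : ({z} : Finset ℕ).card ≤ 3)
    rw [mem_singleton] at hz''
    exact good_of_pair hA hB hzU hz''U (fun e => hz'' e.symm)
      (by have := pair_inter_le_one (z' := z'') hzA; omega)
      (by have := pair_inter_le_one (z' := z'') hz'B; omega)
  · refine good_of_pair hA hB hzU hz'U hne ?_ ?_
    · have := pair_inter_le_one (z' := z') hzA; omega
    · have hcomm : (({z, z'} : Finset ℕ) ∩ (B \ s)).card =
          (({z', z} : Finset ℕ) ∩ (B \ s)).card := by rw [pair_comm]
      have := pair_inter_le_one (z' := z) hz'B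
      omega

/-- N2: if `s` fails with `|s∩A| ≤ 1` and `|s∩B| = 2`, then `U ⊆ (A∪B) \ s`. -/
lemma fail_N2 {V A U B s : Finset ℕ} (hA : A.card = 4) (hB : B.card = 4) (hU : U.card = 4)
    (h : ¬ good A U B s) (ha : (s ∩ A).card ≤ 1) (hb : (s ∩ B).card = 2) :
    U ⊆ (A ∪ B) \ s := by
  by_contra hc
  obtain ⟨z, hzU, hz⟩ := not_subset.1 hc
  have hzA : z ∉ A \ s := by
    intro hx
    rw [mem_sdiff] at hx
    exact hz (by rw [mem_sdiff, mem_union]; exact ⟨Or.inl hx.1, hx.2⟩)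
  have hzB : z ∉ B \ s := by
    intro hx
    rw [mem_sdiff] at hx
    exact hz (by rw [mem_sdiff, mem_union]; exact ⟨Or.inr hx.1, hx.2⟩)
  have hBs : (B \ s).card = 2 := by
    have := card_inter_add_card_sdiff B s
    rw [inter_comm] at this
    omega
  obtain ⟨z', hz'U, hz'⟩ : ∃ z' ∈ U, z' ∉ insert z (B \ s) := by
    apply card_sdiff_lower hU
    have : (insert z (B \ s)).card ≤ (B \ s).card + 1 := card_insert_le _ _
    omega
  have hz'z : z ≠ z' := fun e => hz' (e ▸ mem_insert_self z _)
  have hz'B : z' ∉ B \ s := fun hx => hz' (mem_insert_of_mem hx)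
  apply h
  refine good_of_pair hA hB hzU hz'U hz'z ?_ ?_
  · have := pair_inter_le_one (z' := z') hzA; omega
  · have := pair_inter_eq_zero (z' := z') hzB hz'B; omega

/-! ### Bridging: from a 4-element `V` to boolean data -/

lemma pair_inter_card {y z : ℕ} (hne : y ≠ z) (W : Finset ℕ) :
    (({y, z} : Finset ℕ) ∩ W).card = bt (decide (y ∈ W)) + bt (decide (z ∈ W)) := by
  by_cases hy : y ∈ W <;> by_cases hz : z ∈ W <;>
    simp [filter_mem_eq_inter.symm, filter_insert, filter_singleton, hy, hz, bt,
      card_insert_of_notMem, hne]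

lemma bt_decide (p : Prop) [Decidable p] : bt (decide p) = if p then 1 else 0 := by
  by_cases h : p <;> simp [h, bt]


/-- Count elements of `V` (enumerated by `x`) satisfying a predicate. -/
lemma cardV_filter {V : Finset ℕ} (x : Fin 4 → ℕ) (hxV : ∀ l, x l ∈ V)
    (hxinj : Function.Injective x) (hxsurj : ∀ y ∈ V, ∃ l, x l = y)
    (p : ℕ → Prop) [DecidablePred p] :
    (V.filter p).card = bt (decide (p (x 0))) + bt (decide (p (x 1))) +
      bt (decide (p (x 2))) + bt (decide (p (x 3))) := by
  have h1 : (Finset.univ.filter (fun l : Fin 4 => p (x l))).card = (V.filter p).card := by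
    apply card_bij (fun l _ => x l)
    · intro l hl
      rw [mem_filter]
      exact ⟨hxV l, (mem_filter.1 hl).2⟩
    · intro l1 _ l2 _ he
      exact hxinj he
    · intro y hy
      rw [mem_filter] at hy
      obtain ⟨l, hl⟩ := hxsurj y hy.1
      exact ⟨l, mem_filter.2 ⟨mem_univ l, by rw [hl]; exact hy.2⟩, hl⟩
  rw [← h1, card_filter, Fin.sum_univ_four]
  simp [bt_decide]

/-- The main bridge: a failing pair yields the abstract failure predicate. -/
lemma bridge {V A U B : Finset ℕ} (hA : A.card = 4) (hU : U.card = 4) (hB : B.card = 4)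
    (x : Fin 4 → ℕ) (hxV : ∀ l, x l ∈ V) (hxinj : Function.Injective x)
    (hxsurj : ∀ y ∈ V, ∃ l, x l = y)
    {i j : Fin 4} (hij : i ≠ j) (hfail : ¬ good A U B {x i, x j}) :
    AFailP (fun l => decide (x l ∈ A)) (fun l => decide (x l ∈ B)) (fun l => decide (x l ∈ U))
      ((U \ V) \ (A ∪ B)).card i j := by
  have hxne : x i ≠ x j := fun h => hij (hxinj h)
  have hs : ({x i, x j} : Finset ℕ).card = 2 := by
    rw [card_insert_of_notMem (by simpa using hxne), card_singleton]
  have hsV : ({x i, x j} : Finset ℕ) ⊆ V := by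
    intro y hy
    rcases mem_insert.1 hy with rfl | hy
    · exact hxV i
    · rw [mem_singleton.1 hy]; exact hxV j
  have hiA := pair_inter_card hxne A
  have hiB := pair_inter_card hxne B
  have hN1 := fail_N1 (V := V) hA hB hU hs hfail
  refine ⟨?_, ?_, ?_⟩
  · show 3 ≤ bt (decide (x i ∈ A)) + bt (decide (x j ∈ A)) +
      (bt (decide (x i ∈ B)) + bt (decide (x j ∈ B)))
    omega
  · -- second component
    have hN3 := fail_N3 (V := V) hA hB hs hfail
    set s : Finset ℕ := {x i, x j} with hsdef
    set Q1 := (U \ V) \ (A ∪ B) with hQ1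
    set Q2 := V.filter (fun y => y ∈ U ∧ y ∉ A ∧ y ∉ B) with hQ2
    set Q3 := s ∩ (U ∩ (A ∪ B)) with hQ3
    have eqU : U \ ((A ∪ B) \ s) = Q1 ∪ Q2 ∪ Q3 := by
      ext y
      have hysV : y ∈ s → y ∈ V := fun h => hsV h
      simp only [hQ1, hQ2, hQ3, mem_union, mem_sdiff, mem_filter, mem_inter]
      constructor
      · rintro ⟨hyU, hy2⟩
        rw [not_and_or, not_not] at hy2
        by_cases hyA : y ∈ A ∨ y ∈ B
        · rcases hy2 with h | h
          · exact absurd hyA h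
          · exact Or.inr ⟨h, hyU, hyA⟩
        · push_neg at hyA
          by_cases hyV : y ∈ V
          · exact Or.inl (Or.inr ⟨hyV, hyU, hyA.1, hyA.2⟩)
          · exact Or.inl (Or.inl ⟨⟨hyU, hyV⟩, by tauto⟩)
      · rintro ((⟨⟨hyU, _⟩, hyAB⟩ | ⟨_, hyU, hyA, hyB⟩) | ⟨hys, hyU, _⟩)
        · exact ⟨hyU, fun h => hyAB h.1⟩
        · exact ⟨hyU, fun h => by tauto⟩
        · exact ⟨hyU, fun h => h.2 hys⟩
    have dQ12 : Disjoint Q1 Q2 := by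
      rw [disjoint_left]
      intro y h1 h2
      rw [hQ1, mem_sdiff, mem_sdiff] at h1
      rw [hQ2, mem_filter] at h2
      exact h1.1.2 h2.1
    have dQ3 : Disjoint (Q1 ∪ Q2) Q3 := by
      rw [disjoint_left]
      intro y h1 h2
      rw [hQ3, mem_inter, mem_inter, mem_union] at h2
      rcases mem_union.1 h1 with h | h
      · rw [hQ1, mem_sdiff] at h
        exact h.2 (mem_union.2 h2.2.2)
      · rw [hQ2, mem_filter] at h
        rcases h2.2.2 with hh | hh
        · exact h.2.2.1 hh
        · exact h.2.2.2 hh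
    have hcard : (U \ ((A ∪ B) \ s)).card = Q1.card + Q2.card + Q3.card := by
      rw [eqU, card_union_of_disjoint dQ3, card_union_of_disjoint dQ12]
    have hQ2c : Q2.card = bt (decide (x 0 ∈ U) && !(decide (x 0 ∈ A) || decide (x 0 ∈ B))) +
        bt (decide (x 1 ∈ U) && !(decide (x 1 ∈ A) || decide (x 1 ∈ B))) +
        bt (decide (x 2 ∈ U) && !(decide (x 2 ∈ A) || decide (x 2 ∈ B))) +
        bt (decide (x 3 ∈ U) && !(decide (x 3 ∈ A) || decide (x 3 ∈ B))) := by
      have conv : ∀ l : Fin 4, bt (decide (x l ∈ U ∧ x l ∉ A ∧ x l ∉ B)) =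
          bt (decide (x l ∈ U) && !(decide (x l ∈ A) || decide (x l ∈ B))) := by
        intro l
        by_cases h1 : x l ∈ U <;> by_cases h2 : x l ∈ A <;> by_cases h3 : x l ∈ B <;>
          simp [h1, h2, h3, bt]
      rw [hQ2, cardV_filter x hxV hxinj hxsurj, conv 0, conv 1, conv 2, conv 3]
    have hQ3c : Q3.card = bt (decide (x i ∈ U) && (decide (x i ∈ A) || decide (x i ∈ B))) +
        bt (decide (x j ∈ U) && (decide (x j ∈ A) || decide (x j ∈ B))) := by
      have conv : ∀ l : Fin 4, bt (decide (x l ∈ U ∩ (A ∪ B))) =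
          bt (decide (x l ∈ U) && (decide (x l ∈ A) || decide (x l ∈ B))) := by
        intro l
        by_cases h1 : x l ∈ U <;> by_cases h2 : x l ∈ A <;> by_cases h3 : x l ∈ B <;>
          simp [h1, h2, h3, bt, mem_inter, mem_union]
      rw [hQ3, pair_inter_card hxne (U ∩ (A ∪ B)), conv i, conv j]
    show Q1.card +
        wsum (fun l => decide (x l ∈ A)) (fun l => decide (x l ∈ B)) (fun l => decide (x l ∈ U)) +
        (bt (decide (x i ∈ U) && (decide (x i ∈ A) || decide (x i ∈ B))) +
         bt (decide (x j ∈ U) && (decide (x j ∈ A) || decide (x j ∈ B)))) ≤ 1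
    simp only [wsum]
    omega
  · -- third component
    intro hd
    simp only [] at hd
    have hd' : (({x i, x j} : Finset ℕ) ∩ A).card = 1 ∨ (({x i, x j} : Finset ℕ) ∩ B).card = 1 := by
      rcases hd with h | h
      · left; omega
      · right; omega
    have haa := inter_card_le_two (A := A) hs
    have hbb := inter_card_le_two (A := B) hs
    have hsub : U ⊆ (A ∪ B) \ ({x i, x j} : Finset ℕ) := by
      rcases hd' with h1 | h1
      · exact fail_N2 (V := V) hA hB hU hfail (by omega) (by omega)
      · have := fail_N2 (V := V) hB hA hU (fun hg => hfail (good_swap hg)) (by omega) (by omega)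
        rwa [union_comm] at this
    refine ⟨?_, ?_, ?_, ?_⟩
    · rw [card_eq_zero, eq_empty_iff_forall_notMem]
      intro y hy
      rw [mem_sdiff, mem_sdiff] at hy
      have := hsub hy.1.1
      rw [mem_sdiff] at this
      exact hy.2 this.1
    · have hl : ∀ l : Fin 4, (!(decide (x l ∈ U)) || (decide (x l ∈ A) || decide (x l ∈ B))) =
          true := by
        intro l
        by_cases hyU : x l ∈ U
        · have := hsub hyU
          rw [mem_sdiff, mem_union] at this
          rcases this.1 with h | h <;> simp [h]
        · simp [hyU]
      show alluB (fun l => decide (x l ∈ A)) (fun l => decide (x l ∈ B))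
          (fun l => decide (x l ∈ U)) = true
      simp only [alluB]
      rw [hl 0, hl 1, hl 2, hl 3]
      rfl
    · show decide (x i ∈ U) = false
      rw [decide_eq_false_iff_not]
      intro hyU
      have := hsub hyU
      rw [mem_sdiff] at this
      exact this.2 (mem_insert_self _ _)
    · show decide (x j ∈ U) = false
      rw [decide_eq_false_iff_not]
      intro hyU
      have := hsub hyU
      rw [mem_sdiff] at this
      exact this.2 (mem_insert_of_mem (mem_singleton_self _))

open Classical in
/-- At most two 2-subsets of `V` fail. -/
lemma badcard {V A U B : Finset ℕ} (hV : V.card = 4) (hA : A.card = 4) (hU : U.card = 4)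
    (hB : B.card = 4) :
    ((V.powersetCard 2).filter (fun s => ¬ good A U B s)).card ≤ 2 := by
  classical
  by_contra hcon
  push_neg at hcon
  obtain ⟨s1, s2, s3, hm1, hm2, hm3, h12, h13, h23⟩ := two_lt_card_iff.1 hcon
  set e := V.orderIsoOfFin hV with he
  set x : Fin 4 → ℕ := fun l => (e l : ℕ) with hx
  have hxV : ∀ l, x l ∈ V := fun l => (e l).2
  have hxinj : Function.Injective x := fun l m h => e.injective (Subtype.ext h)
  have hxsurj : ∀ y ∈ V, ∃ l, x l = y := fun y hy => ⟨e.symm ⟨y, hy⟩, by simp [hx]⟩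
  have pairidx : ∀ s : Finset ℕ,
      s ∈ (V.powersetCard 2).filter (fun s => ¬ good A U B s) →
      ∃ i j : Fin 4, i < j ∧ s = {x i, x j} := by
    intro s hs
    rw [mem_filter, mem_powersetCard] at hs
    obtain ⟨⟨hsV, hsc⟩, _⟩ := hs
    obtain ⟨y, z, hyz, rfl⟩ := card_eq_two.1 hsc
    obtain ⟨i, hi⟩ := hxsurj y (hsV (mem_insert_self _ _))
    obtain ⟨j, hj⟩ := hxsurj z (hsV (mem_insert_of_mem (mem_singleton_self _)))
    have hij : i ≠ j := fun h => hyz (by rw [← hi, ← hj, h])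
    rcases lt_or_gt_of_ne hij with h | h
    · exact ⟨i, j, h, by rw [hi, hj]⟩
    · exact ⟨j, i, h, by rw [hi, hj, pair_comm]⟩
  obtain ⟨i1, j1, o1, he1⟩ := pairidx s1 hm1
  obtain ⟨i2, j2, o2, he2⟩ := pairidx s2 hm2
  obtain ⟨i3, j3, o3, he3⟩ := pairidx s3 hm3
  have hf1 : ¬ good A U B {x i1, x j1} := he1 ▸ (mem_filter.1 hm1).2
  have hf2 : ¬ good A U B {x i2, x j2} := he2 ▸ (mem_filter.1 hm2).2
  have hf3 : ¬ good A U B {x i3, x j3} := he3 ▸ (mem_filter.1 hm3).2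
  have F1 := bridge hA hU hB x hxV hxinj hxsurj (ne_of_lt o1) hf1
  have F2 := bridge hA hU hB x hxV hxinj hxsurj (ne_of_lt o2) hf2
  have F3 := bridge hA hU hB x hxV hxinj hxsurj (ne_of_lt o3) hf3
  have hk : ((U \ V) \ (A ∪ B)).card ≤ 4 := by
    have hsub : (U \ V) \ (A ∪ B) ⊆ U := fun y hy => sdiff_subset (sdiff_subset hy)
    have := card_le_card hsub
    omega
  -- counting inequality
  have cA : (V ∩ A).card = bt (decide (x 0 ∈ A)) + bt (decide (x 1 ∈ A)) +
      bt (decide (x 2 ∈ A)) + bt (decide (x 3 ∈ A)) := by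
    rw [← filter_mem_eq_inter]; exact cardV_filter x hxV hxinj hxsurj _
  have cB : (V ∩ B).card = bt (decide (x 0 ∈ B)) + bt (decide (x 1 ∈ B)) +
      bt (decide (x 2 ∈ B)) + bt (decide (x 3 ∈ B)) := by
    rw [← filter_mem_eq_inter]; exact cardV_filter x hxV hxinj hxsurj _
  have cU : (V ∩ U).card = bt (decide (x 0 ∈ U)) + bt (decide (x 1 ∈ U)) +
      bt (decide (x 2 ∈ U)) + bt (decide (x 3 ∈ U)) := by
    rw [← filter_mem_eq_inter]; exact cardV_filter x hxV hxinj hxsurj _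
  have fact1 : (V ∩ A).card + (V ∩ B).card + ((U \ V) ∩ (A ∪ B)).card ≤ 8 := by
    have c1 := card_union_add_card_inter (V ∩ A) (V ∩ B)
    have e1 : (V ∩ A) ∪ (V ∩ B) = V ∩ (A ∪ B) := (inter_union_distrib_left V A B).symm
    have le1 : ((V ∩ A) ∩ (V ∩ B)).card ≤ (A ∩ B).card := by
      apply card_le_card
      intro y hy
      simp only [mem_inter] at *
      tauto
    have c2 := card_inter_add_card_sdiff (A ∪ B) V
    have commV : V ∩ (A ∪ B) = (A ∪ B) ∩ V := inter_comm _ _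
    have le2 : ((U \ V) ∩ (A ∪ B)).card ≤ ((A ∪ B) \ V).card := by
      apply card_le_card
      intro y hy
      simp only [mem_inter, mem_sdiff] at *
      tauto
    have c3 := card_union_add_card_inter A B
    rw [e1, commV] at c1
    omega
  have fact2 : (V ∩ U).card + ((U \ V) ∩ (A ∪ B)).card + ((U \ V) \ (A ∪ B)).card = 4 := by
    have c4 := card_inter_add_card_sdiff U V
    have c5 := card_inter_add_card_sdiff (U \ V) (A ∪ B)
    rw [inter_comm V U]
    omega
  have d12 : (i1, j1) ≠ (i2, j2) := by
    intro h
    rw [Prod.mk.injEq] at h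
    exact h12 (by rw [he1, he2, h.1, h.2])
  have d13 : (i1, j1) ≠ (i3, j3) := by
    intro h
    rw [Prod.mk.injEq] at h
    exact h13 (by rw [he1, he3, h.1, h.2])
  have d23 : (i2, j2) ≠ (i3, j3) := by
    intro h
    rw [Prod.mk.injEq] at h
    exact h23 (by rw [he2, he3, h.1, h.2])
  have H2 : bt (decide (x 0 ∈ A)) + bt (decide (x 1 ∈ A)) + bt (decide (x 2 ∈ A)) +
      bt (decide (x 3 ∈ A)) + (bt (decide (x 0 ∈ B)) + bt (decide (x 1 ∈ B)) +
      bt (decide (x 2 ∈ B)) + bt (decide (x 3 ∈ B))) ≤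
      4 + (bt (decide (x 0 ∈ U)) + bt (decide (x 1 ∈ U)) + bt (decide (x 2 ∈ U)) +
      bt (decide (x 3 ∈ U))) + ((U \ V) \ (A ∪ B)).card := by omega
  exact abs_main (fun l => decide (x l ∈ A)) (fun l => decide (x l ∈ B))
    (fun l => decide (x l ∈ U)) ((U \ V) \ (A ∪ B)).card hk H2
    i1 j1 i2 j2 i3 j3 o1 o2 o3 d12 d13 d23 F1 F2 F3

/-- Key combinatorial lemma: at least four achievable 2-subsets. -/
lemma key {V A U B : Finset ℕ} (hV : V.card = 4) (hA : A.card = 4) (hU : U.card = 4)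
    (hB : B.card = 4) :
    ∃ S : Finset (Finset ℕ), 4 ≤ S.card ∧ ∀ s ∈ S, s ⊆ V ∧ s.card = 2 ∧ good A U B s := by
  classical
  refine ⟨(V.powersetCard 2).filter (good A U B), ?_, ?_⟩
  · have h6 : (V.powersetCard 2).card = 6 := by
      rw [card_powersetCard, hV]
      decide
    have hsplit := card_filter_add_card_filter_not (s := V.powersetCard 2)
      (p := good A U B)
    have hbad := badcard hV hA hU hB
    have hbad' : ((V.powersetCard 2).filter (fun s => ¬ good A U B s)).card ≤ 2 := by
      convert hbad
    omega
  · intro s hs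
    rw [mem_filter, mem_powersetCard] at hs
    exact ⟨hs.1.1, hs.1.2, hs.2⟩

/-- Assemble a 2-fold coloring of `C4` from the four color sets. -/
lemma assemble (L : Fin 4 → Finset ℕ) (v : Fin 4) {s α t β : Finset ℕ}
    (h0 : s ⊆ L v) (h1 : α ⊆ L (v+1)) (h2 : t ⊆ L (v+2)) (h3 : β ⊆ L (v+3))
    (c0 : s.card = 2) (c1 : α.card = 2) (c2 : t.card = 2) (c3 : β.card = 2)
    (d1 : Disjoint s α) (d2 : Disjoint α t) (d3 : Disjoint t β) (d4 : Disjoint β s) :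
    ∃ φ : Fin 4 → Finset ℕ, (∀ i, φ i ⊆ L i) ∧ (∀ i, (φ i).card = 2) ∧
      (∀ i j, C4.Adj i j → Disjoint (φ i) (φ j)) ∧ φ v = s := by
  obtain ⟨n1, n2, n3, n4, n5, n6⟩ :=
    (by decide : ∀ w : Fin 4, w+1 ≠ w ∧ w+2 ≠ w ∧ w+3 ≠ w ∧ w+2 ≠ w+1 ∧ w+3 ≠ w+1 ∧
      w+3 ≠ w+2) v
  set φ : Fin 4 → Finset ℕ :=
    fun i => if i = v then s else if i = v+1 then α else if i = v+2 then t else β with hφ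
  have e0 : φ v = s := by simp [hφ]
  have e1 : φ (v+1) = α := by simp [hφ, n1]
  have e2 : φ (v+2) = t := by simp [hφ, n2, n4]
  have e3 : φ (v+3) = β := by simp [hφ, n3, n5, n6]
  have hcase := (by decide : ∀ w i : Fin 4, i = w ∨ i = w+1 ∨ i = w+2 ∨ i = w+3) v
  refine ⟨φ, ?_, ?_, ?_, e0⟩
  · intro i
    rcases hcase i with rfl | rfl | rfl | rfl <;>
      simp only [e0, e1, e2, e3] <;> assumption
  · intro i
    rcases hcase i with rfl | rfl | rfl | rfl <;>
      simp only [e0, e1, e2, e3] <;> assumption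
  · intro i j hadj
    have hadj' : (SimpleGraph.fromRel (fun i j : Fin 4 => j = i + 1)).Adj i j := hadj
    rw [SimpleGraph.fromRel_adj] at hadj'
    obtain ⟨hne', hor⟩ := hadj'
    have hedge := (by decide : ∀ w i j : Fin 4, i ≠ j → (j = i + 1 ∨ i = j + 1) →
      (i = w ∧ j = w+1) ∨ (i = w+1 ∧ j = w) ∨ (i = w+1 ∧ j = w+2) ∨ (i = w+2 ∧ j = w+1) ∨
      (i = w+2 ∧ j = w+3) ∨ (i = w+3 ∧ j = w+2) ∨ (i = w+3 ∧ j = w) ∨ (i = w ∧ j = w+3))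
      v i j hne' hor
    rcases hedge with ⟨rfl, rfl⟩ | ⟨rfl, rfl⟩ | ⟨rfl, rfl⟩ | ⟨rfl, rfl⟩ | ⟨rfl, rfl⟩ |
      ⟨rfl, rfl⟩ | ⟨rfl, rfl⟩ | ⟨rfl, rfl⟩
    · rw [e0, e1]; exact d1
    · rw [e1, e0]; exact d1.symm
    · rw [e1, e2]; exact d2
    · rw [e2, e1]; exact d2.symm
    · rw [e2, e3]; exact d3
    · rw [e3, e2]; exact d3.symm
    · rw [e3, e0]; exact d4
    · rw [e0, e3]; exact d4.symm

end Stmt16Aux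


/-- For every 4-list assignment `L` on `C_4` and every vertex `v`, at least four distinct
2-subsets of `L v` are achievable as `φ v` in some 2-fold `L`-coloring: no 4-assignment
for `C_4` is 3-forcing for any vertex. -/
theorem stmt_16 (L : Fin 4 → Finset ℕ) (hL : ∀ i, (L i).card = 4) (v : Fin 4) :
    ∃ S : Finset (Finset ℕ), 4 ≤ S.card ∧
      ∀ s ∈ S, s ⊆ L v ∧ s.card = 2 ∧
        ∃ φ : Fin 4 → Finset ℕ, (∀ i, φ i ⊆ L i) ∧ (∀ i, (φ i).card = 2) ∧
          (∀ i j, C4.Adj i j → Disjoint (φ i) (φ j)) ∧ φ v = s := by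
  obtain ⟨S, hS4, hSgood⟩ := Stmt16Aux.key (hL v) (hL (v+1)) (hL (v+2)) (hL (v+3))
  refine ⟨S, hS4, ?_⟩
  intro s hs
  obtain ⟨hsub, hcard, t, htU, htc, hA2, hB2⟩ := hSgood s hs
  obtain ⟨a, hasub, hac⟩ := Finset.exists_subset_card_eq hA2
  obtain ⟨b, hbsub, hbc⟩ := Finset.exists_subset_card_eq hB2
  refine ⟨hsub, hcard, Stmt16Aux.assemble L v hsub
    (hasub.trans (Finset.sdiff_subset)) htU (hbsub.trans (Finset.sdiff_subset))
    hcard hac htc hbc ?_ ?_ ?_ ?_⟩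
  · exact Finset.disjoint_left.mpr fun y hy hya =>
      (Finset.mem_sdiff.1 (hasub hya)).2 (Finset.mem_union_left _ hy)
  · exact Finset.disjoint_left.mpr fun y hya hyt =>
      (Finset.mem_sdiff.1 (hasub hya)).2 (Finset.mem_union_right _ hyt)
  · exact Finset.disjoint_right.mpr fun y hyb hyt =>
      (Finset.mem_sdiff.1 (hbsub hyb)).2 (Finset.mem_union_right _ hyt)
  · exact Finset.disjoint_left.mpr fun y hyb hys =>
      (Finset.mem_sdiff.1 (hbsub hyb)).2 (Finset.mem_union_left _ hys)
end

section
/- Let L and L' be list assignments for a graph G such that L' is obtained from L by a single flattening move: for some color α, some connected component C of the subgraph G_α induced by vertices with α in their list, and some color β not in any list L(v) for v ∈ V(C), replace α by β in L(v) for every v ∈ V(C). Then the map sending a b-fold L'-coloring φ' to the coloring obtained by replacing β with α in φ'(v) for each v ∈ V(C) with β ∈ φ'(v) is an injection from b-fold L'-colorings of G to b-fold L-colorings of G. -/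
/-- `φ` is a `b`-fold `L`-coloring of `G`. -/
def IsFoldColoring {V : Type*} (G : SimpleGraph V) (L : V → Finset ℕ) (b : ℕ)
    (φ : V → Finset ℕ) : Prop :=
  (∀ v, φ v ⊆ L v) ∧ (∀ v, (φ v).card = b) ∧ ∀ v w, G.Adj v w → Disjoint (φ v) (φ w)

open scoped Classical

/-- Flattening move: if `L'` is obtained from `L` by replacing `α` with `β` on a
connected component `C` of `G_α` (where `β` appears in no list on `C`), then replacing
`β` back by `α` maps `b`-fold `L'`-colorings injectively to `b`-fold `L`-colorings. -/
theorem stmt_17 {V : Type*} (G : SimpleGraph V) (L : V → Finset ℕ) (b : ℕ) (α β : ℕ)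
    (C : Set V)
    (hCsub : ∀ v ∈ C, α ∈ L v)
    (hConn : (SimpleGraph.induce C G).Connected)
    (hClosed : ∀ v ∈ C, ∀ w, α ∈ L w → G.Adj v w → w ∈ C)
    (hβ : ∀ v ∈ C, β ∉ L v)
    (L' : V → Finset ℕ)
    (hL' : ∀ v, L' v = if v ∈ C then insert β ((L v).erase α) else L v)
    (Φ : (V → Finset ℕ) → (V → Finset ℕ))
    (hΦ : ∀ φ' v, Φ φ' v = if v ∈ C ∧ β ∈ φ' v then insert α ((φ' v).erase β) else φ' v) :
    (∀ φ', IsFoldColoring G L' b φ' → IsFoldColoring G L b (Φ φ')) ∧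
      (∀ φ' ψ', IsFoldColoring G L' b φ' → IsFoldColoring G L' b ψ' →
        Φ φ' = Φ ψ' → φ' = ψ') := by
  have hαβ : ∀ v ∈ C, α ≠ β := fun v hv h => hβ v hv (h ▸ hCsub v hv)
  -- α is not in any L'-coloring value on C
  have hαnot : ∀ φ', IsFoldColoring G L' b φ' → ∀ v ∈ C, α ∉ φ' v := by
    intro φ' ⟨hsub, _, _⟩ v hv h
    have h2 := hsub v h
    rw [hL'] at h2
    simp only [hv, if_true, Finset.mem_insert, Finset.mem_erase] at h2
    rcases h2 with h2 | h2
    · exact hαβ v hv h2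
    · exact h2.1 rfl
  constructor
  · rintro φ' hφ'
    obtain ⟨hsub, hcard, hdisj⟩ := hφ'
    have hαadj : ∀ v ∈ C, ∀ w, G.Adj v w → α ∉ φ' w := by
      intro v hv w hadj h
      by_cases hw : w ∈ C
      · exact hαnot φ' ⟨hsub, hcard, hdisj⟩ w hw h
      · have h2 := hsub w h
        rw [hL'] at h2
        simp only [hw, if_false] at h2
        exact hw (hClosed v hv w h2 hadj)
    refine ⟨?_, ?_, ?_⟩
    · intro v x hx
      rw [hΦ] at hx
      split_ifs at hx with h
      · obtain ⟨hv, hb⟩ := h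
        rcases Finset.mem_insert.1 hx with rfl | hx
        · exact hCsub v hv
        · obtain ⟨hxβ, hxφ⟩ := Finset.mem_erase.1 hx
          have h2 := hsub v hxφ
          rw [hL'] at h2
          simp only [hv, if_true, Finset.mem_insert, Finset.mem_erase] at h2
          rcases h2 with h2 | h2
          · exact absurd h2 hxβ
          · exact h2.2
      · by_cases hv : v ∈ C
        · have hb : β ∉ φ' v := fun hb => h ⟨hv, hb⟩
          have h2 := hsub v hx
          rw [hL'] at h2
          simp only [hv, if_true, Finset.mem_insert, Finset.mem_erase] at h2
          rcases h2 with h2 | h2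
          · exact absurd (h2 ▸ hx) hb
          · exact h2.2
        · have h2 := hsub v hx
          rw [hL'] at h2
          simpa only [hv, if_false] using h2
    · intro v
      rw [hΦ]
      split_ifs with h
      · obtain ⟨hv, hb⟩ := h
        have hα : α ∉ (φ' v).erase β :=
          fun hx => hαnot φ' ⟨hsub, hcard, hdisj⟩ v hv (Finset.mem_of_mem_erase hx)
        rw [Finset.card_insert_of_notMem hα, Finset.card_erase_of_mem hb, hcard v]
        have : 1 ≤ b := by
          rw [← hcard v]; exact Finset.card_pos.2 ⟨β, hb⟩
        omega
      · exact hcard v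
    · intro v w hadj
      rw [hΦ, hΦ]
      split_ifs with h1 h2 h2
      · exact absurd (Finset.disjoint_left.1 (hdisj v w hadj) h1.2) (fun h => h h2.2)
      · rw [Finset.disjoint_insert_left]
        exact ⟨hαadj v h1.1 w hadj,
          (hdisj v w hadj).mono_left (Finset.erase_subset _ _)⟩
      · rw [Finset.disjoint_insert_right]
        exact ⟨hαadj w h2.1 v hadj.symm,
          (hdisj v w hadj).mono_right (Finset.erase_subset _ _)⟩
      · exact hdisj v w hadj
  · intro φ' ψ' hφ hψ heq
    funext v
    have h := congrFun heq v
    rw [hΦ, hΦ] at h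
    by_cases hv : v ∈ C
    · have hαφ := hαnot φ' hφ v hv
      have hαψ := hαnot ψ' hψ v hv
      by_cases hbφ : β ∈ φ' v <;> by_cases hbψ : β ∈ ψ' v
      · simp only [hv, hbφ, hbψ, and_self, if_true, true_and] at h
        have h2 : ((insert α ((φ' v).erase β)).erase α) =
            ((insert α ((ψ' v).erase β)).erase α) := by rw [h]
        rw [Finset.erase_insert (fun hx => hαφ (Finset.mem_of_mem_erase hx)),
          Finset.erase_insert (fun hx => hαψ (Finset.mem_of_mem_erase hx))] at h2
        have h3 : insert β ((φ' v).erase β) = insert β ((ψ' v).erase β) := by rw [h2]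
        rwa [Finset.insert_erase hbφ, Finset.insert_erase hbψ] at h3
      · simp only [hv, hbφ, hbψ, and_true, and_false, if_true, if_false, true_and] at h
        exact absurd (h ▸ Finset.mem_insert_self α _) hαψ
      · simp only [hv, hbφ, hbψ, and_true, and_false, if_true, if_false, true_and] at h
        exact absurd (h ▸ Finset.mem_insert_self α _) hαφ
      · simpa only [hv, hbφ, hbψ, and_false, if_false] using h
    · simpa only [hv, false_and, if_false] using h
end

section
/- If a graph G has an ear decomposition then G is 2-connected, and conversely: if G is 2-connected and H is a 2-connected subgraph of G, then G has an ear decomposition beginning with an ear decomposition of H. -/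
/-- `G` is 2-connected: at least 3 vertices, connected, and no cut-vertex. -/
def TwoConnected {V : Type*} (G : SimpleGraph V) : Prop :=
  3 ≤ Nat.card V ∧ G.Connected ∧
    ∀ v : V, (SimpleGraph.induce ({v}ᶜ : Set V) G).Connected

/-- `EarExt G H K` : the subgraph `K` of `G` can be obtained from `H` by successively
adding ears: paths of positive length with endpoints in the current subgraph, internal
vertices outside it, and all edges new. -/
inductive EarExt {V : Type*} (G : SimpleGraph V) : G.Subgraph → G.Subgraph → Prop
  | refl (H : G.Subgraph) : EarExt G H H
  | ear {H K : G.Subgraph} (hHK : EarExt G H K) {u v : V} (p : G.Walk u v)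
      (hp : p.IsPath) (hlen : 0 < p.length) (hu : u ∈ K.verts) (hv : v ∈ K.verts)
      (hint : ∀ w ∈ p.support, w ≠ u → w ≠ v → w ∉ K.verts)
      (hedge : ∀ e ∈ p.edges, e ∉ K.edgeSet) :
      EarExt G H (K ⊔ p.toSubgraph)

/-- `H` is the start of an ear decomposition: a single edge `P₀ = uv` together with a
first ear `P₁`, a `u,v`-path avoiding the edge `uv`, so that `P₀ ∪ P₁` is a cycle. -/
def IsCycleStart {V : Type*} (G : SimpleGraph V) (H : G.Subgraph) : Prop :=
  ∃ (u v : V) (h : G.Adj u v) (p : G.Walk u v), p.IsPath ∧ s(u, v) ∉ p.edges ∧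
    H = G.subgraphOfAdj h ⊔ p.toSubgraph

section EarAux

open SimpleGraph Walk

variable {V : Type*} {G : SimpleGraph V}

lemma exists_mem_notin_pair {s : Set V} (h3 : 3 ≤ Nat.card s) (x y : V) :
    ∃ z ∈ s, z ≠ x ∧ z ≠ y := by
  rw [Nat.card_coe_set_eq] at h3
  by_contra h
  push_neg at h
  have hsub : s ⊆ {x, y} := by
    intro z hz
    rcases eq_or_ne z x with rfl | hzx
    · exact Set.mem_insert _ _
    · simp [h z hz hzx]
  have hle := Set.ncard_le_ncard hsub (Set.toFinite _)
  have h2 : ({x, y} : Set V).ncard ≤ 2 :=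
    (Set.ncard_insert_le x {y}).trans (by simp)
  omega

lemma exists_notin_pair (h3 : 3 ≤ Nat.card V) (x y : V) : ∃ z, z ≠ x ∧ z ≠ y := by
  have h3' : 3 ≤ Nat.card (Set.univ : Set V) := by
    rwa [Nat.card_congr (Equiv.Set.univ V)]
  obtain ⟨z, _, hz⟩ := exists_mem_notin_pair h3' x y
  exact ⟨z, hz⟩

lemma walk_toSubgraph_le {A : G.Subgraph} : ∀ {u v : V} (p : G.Walk u v),
    (∀ w ∈ p.support, w ∈ A.verts) → (∀ e ∈ p.edges, e ∈ A.edgeSet) → p.toSubgraph ≤ A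
  | u, _, Walk.nil, hs, _ => by
      simp only [Walk.toSubgraph]
      rw [SimpleGraph.singletonSubgraph_le_iff]
      exact hs u (by simp)
  | u, v, @Walk.cons _ _ _ w _ h p, hs, he => by
      simp only [Walk.toSubgraph]
      have hA : A.Adj u w := Subgraph.mem_edgeSet.1 (he s(u, w) (by simp))
      exact sup_le (SimpleGraph.subgraphOfAdj_le_of_adj A hA)
        (walk_toSubgraph_le p (fun w hw => hs w (by simp [hw]))
          (fun e hee => he e (by simp [hee])))

lemma exists_firsthit {S : Set V} : ∀ {a b : V} (q : G.Walk a b), q.IsPath → a ∉ S → b ∈ S →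
    ∃ (c : V) (r : G.Walk a c), c ∈ S ∧ r.IsPath ∧ 0 < r.length ∧
      (∀ w ∈ r.support, w ∈ q.support) ∧ (∀ e ∈ r.edges, e ∈ q.edges) ∧
      (∀ w ∈ r.support, w ≠ c → w ∉ S)
  | a, _, Walk.nil, _, ha, hb => absurd hb ha
  | a, b, @Walk.cons _ _ _ a' _ h q', hq, ha, hb => by
      by_cases ha' : a' ∈ S
      · refine ⟨a', Walk.cons h Walk.nil, ha', by simp [h.ne], by simp, ?_, ?_, ?_⟩
        · intro w hw
          simp only [support_cons, support_nil, List.mem_cons, List.not_mem_nil,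
            or_false] at hw ⊢
          rcases hw with h1 | h1
          · exact Or.inl h1
          · subst h1; exact Or.inr (start_mem_support _)
        · intro e he; simp at he; simp [he]
        · intro w hw hwc
          simp only [support_cons, support_nil, List.mem_cons, List.not_mem_nil,
            or_false] at hw
          rcases hw with h1 | h1
          · subst h1; exact ha
          · exact absurd h1 hwc
      · obtain ⟨c, r, hc, hr, hlen, hsup, hed, hint⟩ :=
          exists_firsthit q' hq.of_cons ha' hb
        refine ⟨c, Walk.cons h r, hc, ?_, by simp, ?_, ?_, ?_⟩
        · rw [Walk.cons_isPath_iff]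
          refine ⟨hr, fun hmem => ?_⟩
          rw [Walk.cons_isPath_iff] at hq
          exact hq.2 (hsup _ hmem)
        · intro w hw
          simp only [support_cons, List.mem_cons] at hw ⊢
          rcases hw with h1 | hw
          · exact Or.inl h1
          · exact Or.inr (hsup w hw)
        · intro e he
          simp only [edges_cons, List.mem_cons] at he ⊢
          rcases he with h1 | he
          · exact Or.inl h1
          · exact Or.inr (hed e he)
        · intro w hw hwc
          simp only [support_cons, List.mem_cons] at hw
          rcases hw with h1 | hw
          · subst h1; exact ha
          · exact hint w hw hwc

lemma support_split [DecidableEq V] {u v x : V} {p : G.Walk u v} (hx : x ∈ p.support) :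
    p.support = (p.takeUntil x hx).support ++ (p.dropUntil x hx).support.tail := by
  have := Walk.support_append (p.takeUntil x hx) (p.dropUntil x hx)
  rw [Walk.take_spec p hx] at this
  exact this

lemma notin_takeUntil [DecidableEq V] {u v x y : V} {p : G.Walk u v} (hp : p.IsPath)
    (hx : x ∈ p.support) (hy : y ∈ (p.dropUntil x hx).support) (hyx : y ≠ x) :
    y ∉ (p.takeUntil x hx).support := by
  intro hmem
  have hnd := hp.support_nodup
  rw [support_split hx] at hnd
  rw [List.nodup_append] at hnd
  refine hnd.2.2 y hmem y ?_ rfl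
  have : (p.dropUntil x hx).support = x :: (p.dropUntil x hx).support.tail :=
    Walk.support_eq_cons _
  rw [this] at hy
  rcases List.mem_cons.1 hy with rfl | hy
  · exact absurd rfl hyx
  · exact hy

lemma notin_dropUntil [DecidableEq V] {u v x y : V} {p : G.Walk u v} (hp : p.IsPath)
    (hx : x ∈ p.support) (hy : y ∈ (p.takeUntil x hx).support) (hyx : y ≠ x) :
    y ∉ (p.dropUntil x hx).support := by
  intro hmem
  have hnd := hp.support_nodup
  rw [support_split hx] at hnd
  rw [List.nodup_append] at hnd
  refine hnd.2.2 y hy y ?_ rfl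
  have : (p.dropUntil x hx).support = x :: (p.dropUntil x hx).support.tail :=
    Walk.support_eq_cons _
  rw [this] at hmem
  rcases List.mem_cons.1 hmem with rfl | hmem
  · exact absurd rfl hyx
  · exact hmem

lemma route [DecidableEq V] {u v x vs : V} {p : G.Walk u v} (hp : p.IsPath)
    (hx : x ∈ p.support) (hxv : x ≠ vs) :
    ∃ e, (e = u ∨ e = v) ∧ ∃ r : G.Walk x e,
      (∀ w ∈ r.support, w ∈ p.support) ∧ vs ∉ r.support := by
  by_cases hvs : vs ∈ p.support
  · by_cases hvu : vs = u
    · subst hvu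
      exact ⟨v, Or.inr rfl, p.dropUntil x hx,
        fun w hw => p.support_dropUntil_subset hx hw,
        notin_dropUntil hp hx ((p.takeUntil x hx).start_mem_support) (Ne.symm hxv)⟩
    · by_cases hvv : vs = v
      · subst hvv
        refine ⟨u, Or.inl rfl, (p.takeUntil x hx).reverse, ?_, ?_⟩
        · intro w hw
          rw [Walk.support_reverse, List.mem_reverse] at hw
          exact p.support_takeUntil_subset hx hw
        · rw [Walk.support_reverse, List.mem_reverse]
          exact notin_takeUntil hp hx ((p.dropUntil x hx).end_mem_support) (Ne.symm hxv)
      · have hx12 : x ∈ (p.takeUntil vs hvs).support ∨ x ∈ (p.dropUntil vs hvs).support := by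
          have h0 := hx
          rw [support_split hvs, List.mem_append] at h0
          exact h0.imp id List.mem_of_mem_tail
        rcases hx12 with hx1 | hx2
        · have hp1 : (p.takeUntil vs hvs).IsPath := hp.takeUntil hvs
          refine ⟨u, Or.inl rfl, ((p.takeUntil vs hvs).takeUntil x hx1).reverse, ?_, ?_⟩
          · intro w hw
            rw [Walk.support_reverse, List.mem_reverse] at hw
            exact p.support_takeUntil_subset hvs
              ((p.takeUntil vs hvs).support_takeUntil_subset hx1 hw)
          · rw [Walk.support_reverse, List.mem_reverse]
            exact notin_takeUntil hp1 hx1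
              (((p.takeUntil vs hvs).dropUntil x hx1).end_mem_support) (Ne.symm hxv)
        · have hp2 : (p.dropUntil vs hvs).IsPath := hp.dropUntil hvs
          refine ⟨v, Or.inr rfl, (p.dropUntil vs hvs).dropUntil x hx2, ?_, ?_⟩
          · intro w hw
            exact p.support_dropUntil_subset hvs
              ((p.dropUntil vs hvs).support_dropUntil_subset hx2 hw)
          · exact notin_dropUntil hp2 hx2
              (((p.dropUntil vs hvs).takeUntil x hx2).start_mem_support) (Ne.symm hxv)
  · refine ⟨u, Or.inl rfl, (p.takeUntil x hx).reverse, ?_, ?_⟩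
    · intro w hw
      rw [Walk.support_reverse, List.mem_reverse] at hw
      exact p.support_takeUntil_subset hx hw
    · rw [Walk.support_reverse, List.mem_reverse]
      exact fun hmem => hvs (p.support_takeUntil_subset hx hmem)

lemma link {u v x y e1 e2 : V} (h : G.Adj u v) (he1 : e1 = u ∨ e1 = v)
    (he2 : e2 = u ∨ e2 = v) (wx : G.Walk x e1) (wy : G.Walk y e2) :
    ∃ q : G.Walk x y, ∀ w ∈ q.support, w ∈ wx.support ∨ w ∈ wy.support := by
  rcases he1 with rfl | rfl <;> rcases he2 with rfl | rfl
  · refine ⟨wx.append wy.reverse, fun w hw => ?_⟩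
    rw [Walk.mem_support_append_iff, Walk.support_reverse, List.mem_reverse] at hw
    exact hw
  · refine ⟨(wx.append (Walk.cons h Walk.nil)).append wy.reverse, fun w hw => ?_⟩
    rw [Walk.mem_support_append_iff, Walk.mem_support_append_iff, Walk.support_reverse,
      List.mem_reverse] at hw
    rcases hw with (hw | hw) | hw
    · exact Or.inl hw
    · simp only [support_cons, support_nil, List.mem_cons, List.not_mem_nil, or_false] at hw
      rcases hw with rfl | rfl
      · exact Or.inl wx.end_mem_support
      · exact Or.inr wy.end_mem_support
    · exact Or.inr hw
  · refine ⟨(wx.append (Walk.cons h.symm Walk.nil)).append wy.reverse, fun w hw => ?_⟩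
    rw [Walk.mem_support_append_iff, Walk.mem_support_append_iff, Walk.support_reverse,
      List.mem_reverse] at hw
    rcases hw with (hw | hw) | hw
    · exact Or.inl hw
    · simp only [support_cons, support_nil, List.mem_cons, List.not_mem_nil, or_false] at hw
      rcases hw with rfl | rfl
      · exact Or.inl wx.end_mem_support
      · exact Or.inr wy.end_mem_support
    · exact Or.inr hw
  · refine ⟨wx.append wy.reverse, fun w hw => ?_⟩
    rw [Walk.mem_support_append_iff, Walk.support_reverse, List.mem_reverse] at hw
    exact hw

lemma reachable_induce_of_walk {s : Set V} {x y : V} (p : G.Walk x y)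
    (hs : ∀ w ∈ p.support, w ∈ s) (hx : x ∈ s) (hy : y ∈ s) :
    (G.induce s).Reachable ⟨x, hx⟩ ⟨y, hy⟩ := by
  induction p with
  | nil => exact Reachable.refl _
  | @cons a c b h p ih =>
      have hc : c ∈ s := hs c (by simp)
      have h1 : (G.induce s).Adj ⟨a, hx⟩ ⟨c, hc⟩ := h
      exact h1.reachable.trans (ih (fun w hw => hs w (by simp [hw])) hc hy)

lemma walk_map_support {W : Type*} {G' : SimpleGraph W} (f : G' →g G) {x y : W}
    (p : G'.Walk x y) : ∀ w ∈ (p.map f).support, ∃ a, f a = w := by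
  intro w hw
  rw [Walk.support_map, List.mem_map] at hw
  obtain ⟨a, _, ha⟩ := hw
  exact ⟨a, ha⟩

lemma walk_map_edges {W : Type*} {G' : SimpleGraph W} (f : G' →g G) {A : G.Subgraph}
    (he : ∀ a b : W, G'.Adj a b → A.Adj (f a) (f b)) {x y : W} (p : G'.Walk x y) :
    ∀ e ∈ (p.map f).edges, e ∈ A.edgeSet := by
  intro e hee
  rw [Walk.edges_map, List.mem_map] at hee
  obtain ⟨e', he', rfl⟩ := hee
  induction e' with
  | _ a b =>
      have hadj : G'.Adj a b := p.adj_of_mem_edges he'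
      exact Subgraph.mem_edgeSet.2 (he a b hadj)

lemma EarExt.trans {H K L : G.Subgraph} (h1 : EarExt G H K) (h2 : EarExt G K L) :
    EarExt G H L := by
  induction h2 with
  | refl => exact h1
  | ear _ p hp hlen hu hv hint hedge ih => exact EarExt.ear ih p hp hlen hu hv hint hedge

/-- Walk connectivity inside a subgraph. -/
def SubConn (A : G.Subgraph) : Prop := ∀ ⦃x y : V⦄, x ∈ A.verts → y ∈ A.verts →
  ∃ p : G.Walk x y, (∀ w ∈ p.support, w ∈ A.verts) ∧ (∀ e ∈ p.edges, e ∈ A.edgeSet)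

/-- Walk connectivity inside a subgraph avoiding any single vertex. -/
def SubCut (A : G.Subgraph) : Prop := ∀ (v : V) ⦃x y : V⦄, x ∈ A.verts → y ∈ A.verts →
  x ≠ v → y ≠ v → ∃ p : G.Walk x y, (∀ w ∈ p.support, w ∈ A.verts) ∧
    (∀ e ∈ p.edges, e ∈ A.edgeSet) ∧ v ∉ p.support

lemma subConn_of_twoConnected {A : G.Subgraph} (h : TwoConnected A.coe) : SubConn A := by
  intro x y hx hy
  obtain ⟨q⟩ := h.2.1.preconnected ⟨x, hx⟩ ⟨y, hy⟩
  refine ⟨q.map A.hom, ?_, walk_map_edges A.hom (fun a b hab => ?_) q⟩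
  · intro w hw
    obtain ⟨a, rfl⟩ := walk_map_support A.hom q w hw
    exact a.2
  · exact hab

lemma subCut_of_twoConnected {A : G.Subgraph} (h : TwoConnected A.coe) : SubCut A := by
  intro v x y hx hy hxv hyv
  by_cases hv : v ∈ A.verts
  · set v' : A.verts := ⟨v, hv⟩
    have hx' : (⟨x, hx⟩ : A.verts) ∈ ({v'}ᶜ : Set A.verts) := by
      simp only [Set.mem_compl_iff, Set.mem_singleton_iff]
      exact fun hc => hxv (congrArg Subtype.val hc)
    have hy' : (⟨y, hy⟩ : A.verts) ∈ ({v'}ᶜ : Set A.verts) := by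
      simp only [Set.mem_compl_iff, Set.mem_singleton_iff]
      exact fun hc => hyv (congrArg Subtype.val hc)
    obtain ⟨q⟩ := (h.2.2 v').preconnected ⟨_, hx'⟩ ⟨_, hy'⟩
    set f : (SimpleGraph.induce ({v'}ᶜ : Set A.verts) A.coe) →g G :=
      A.hom.comp (SimpleGraph.Embedding.induce _).toHom with hf
    refine ⟨q.map f, ?_, walk_map_edges f (fun a b hab => hab) q, ?_⟩
    · intro w hw
      obtain ⟨a, rfl⟩ := walk_map_support f q w hw
      exact a.1.2
    · intro hmem
      obtain ⟨a, ha⟩ := walk_map_support f q v hmem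
      exact a.2 (by ext; exact ha)
  · obtain ⟨p, hsup, hed⟩ := subConn_of_twoConnected h hx hy
    exact ⟨p, hsup, hed, fun hmem => hv (hsup v hmem)⟩

lemma subConn_top (h : TwoConnected G) : SubConn (⊤ : G.Subgraph) := by
  intro x y _ _
  obtain ⟨p⟩ := h.2.1.preconnected x y
  exact ⟨p, fun w _ => by simp [Subgraph.verts_top], fun e he => p.edges_subset_edgeSet he⟩

lemma subCut_top (h : TwoConnected G) : SubCut (⊤ : G.Subgraph) := by
  intro v x y _ _ hxv hyv
  obtain ⟨q⟩ := (h.2.2 v).preconnected ⟨x, hxv⟩ ⟨y, hyv⟩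
  set f : (SimpleGraph.induce ({v}ᶜ : Set V) G) →g G := (SimpleGraph.Embedding.induce _).toHom
  refine ⟨q.map f, fun w _ => by simp [Subgraph.verts_top], ?_, ?_⟩
  · exact walk_map_edges f (fun a b hab => Subgraph.top_adj.2 hab) q
  · intro hmem
    obtain ⟨a, ha⟩ := walk_map_support f q v hmem
    exact a.2 ha

lemma exists_ear [DecidableEq V] {A K : G.Subgraph} (hC : SubConn A) (hD : SubCut A)
    (hKA : K ≤ A) (h2 : ∃ a ∈ K.verts, ∃ b ∈ K.verts, a ≠ b) (hne : ¬ A ≤ K) :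
    ∃ (u v : V) (q : G.Walk u v), q.IsPath ∧ 0 < q.length ∧ u ∈ K.verts ∧ v ∈ K.verts ∧
      (∀ w ∈ q.support, w ≠ u → w ≠ v → w ∉ K.verts) ∧ (∀ e ∈ q.edges, e ∉ K.edgeSet) ∧
      (∀ w ∈ q.support, w ∈ A.verts) ∧ (∀ e ∈ q.edges, e ∈ A.edgeSet) := by
  obtain ⟨a0, ha0, b0, hb0, hab0⟩ := h2
  by_cases hAV : A.verts ⊆ K.verts
  · -- there must be a missing edge with both endpoints in K
    have hedge : ∃ x y, A.Adj x y ∧ ¬ K.Adj x y := by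
      by_contra hc
      push_neg at hc
      exact hne ⟨hAV, fun x y hxy => hc x y hxy⟩
    obtain ⟨x, y, hxy, hnxy⟩ := hedge
    refine ⟨x, y, Walk.cons hxy.adj_sub Walk.nil, by simp [hxy.adj_sub.ne], by simp,
      hAV hxy.fst_mem, hAV hxy.snd_mem, ?_, ?_, ?_, ?_⟩
    · intro w hw hwx hwy
      simp only [support_cons, support_nil, List.mem_cons, List.not_mem_nil, or_false] at hw
      rcases hw with h1 | h1
      · exact absurd h1 hwx
      · exact absurd h1 hwy
    · intro e he
      simp only [edges_cons, edges_nil, List.mem_cons, List.not_mem_nil, or_false] at he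
      subst he
      exact fun hmem => hnxy (Subgraph.mem_edgeSet.1 hmem)
    · intro w hw
      simp only [support_cons, support_nil, List.mem_cons, List.not_mem_nil, or_false] at hw
      rcases hw with h1 | h1
      · subst h1; exact hxy.fst_mem
      · subst h1; exact hxy.snd_mem
    · intro e he
      simp only [edges_cons, edges_nil, List.mem_cons, List.not_mem_nil, or_false] at he
      subst he
      exact Subgraph.mem_edgeSet.2 hxy
  · -- there is a vertex of A outside K
    obtain ⟨y0, hy0A, hy0K⟩ := Set.not_subset.1 hAV
    -- find a boundary dart on a walk from a0 to y0 inside A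
    obtain ⟨w0, hw0sup, hw0ed⟩ := hC (hKA.1 ha0) hy0A
    obtain ⟨d, hd, hdfst, hdsnd⟩ := w0.exists_boundary_dart K.verts ha0 hy0K
    set x := d.toProd.1
    set y' := d.toProd.2
    have hxy' : G.Adj x y' := d.adj
    have hedA : s(x, y') ∈ A.edgeSet := hw0ed _ (List.mem_map_of_mem (f := Dart.edge) hd)
    have hy'A : y' ∈ A.verts := (Subgraph.mem_edgeSet.1 hedA).snd_mem
    -- pick z in K distinct from x
    have hz : ∃ z ∈ K.verts, z ≠ x := by
      rcases eq_or_ne a0 x with rfl | hax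
      · exact ⟨b0, hb0, fun hc => hab0 hc.symm⟩
      · exact ⟨a0, ha0, hax⟩
    obtain ⟨z, hzK, hzx⟩ := hz
    have hy'x : y' ≠ x := fun hc => hdsnd (by rw [hc]; exact hdfst)
    obtain ⟨w1, hw1sup, hw1ed, hw1x⟩ := hD x hy'A (hKA.1 hzK) hy'x hzx
    obtain ⟨c2, r2, hc2K, hr2, hr2len, hr2sup, hr2ed, hr2int⟩ :=
      exists_firsthit (w1.toPath : G.Walk y' z) w1.toPath.2 hdsnd hzK
    have hr2supA : ∀ w ∈ r2.support, w ∈ A.verts :=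
      fun w hw => hw1sup w (w1.support_toPath_subset (hr2sup w hw))
    have hr2edA : ∀ e ∈ r2.edges, e ∈ A.edgeSet :=
      fun e he => hw1ed e (w1.edges_toPath_subset (hr2ed e he))
    have hr2x : x ∉ r2.support :=
      fun hmem => hw1x (w1.support_toPath_subset (hr2sup x hmem))
    have hxA : G.Adj x y' := hxy'
    refine ⟨x, c2, Walk.cons hxA r2, ?_, by simp, hdfst, hc2K, ?_, ?_, ?_, ?_⟩
    · exact (Walk.cons_isPath_iff _ _).2 ⟨hr2, hr2x⟩
    · intro w hw hwx hwc
      simp only [support_cons, List.mem_cons] at hw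
      rcases hw with h1 | hw
      · exact absurd h1 hwx
      · exact hr2int w hw hwc
    · intro e he
      simp only [edges_cons, List.mem_cons] at he
      rcases he with rfl | he
      · exact fun hmem => hdsnd (Subgraph.mem_edgeSet.1 hmem).snd_mem
      · intro hmem
        induction e with
        | _ a b =>
            have hKab : K.Adj a b := Subgraph.mem_edgeSet.1 hmem
            have haS : a ∈ r2.support := r2.fst_mem_support_of_mem_edges he
            have hbS : b ∈ r2.support := r2.snd_mem_support_of_mem_edges he
            have ha' : a = c2 := by
              by_contra hac
              exact hr2int a haS hac hKab.fst_mem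
            have hb' : b = c2 := by
              by_contra hbc
              exact hr2int b hbS hbc hKab.snd_mem
            exact hKab.adj_sub.ne (ha'.trans hb'.symm)
    · intro w hw
      simp only [support_cons, List.mem_cons] at hw
      rcases hw with h1 | hw
      · subst h1; exact hKA.1 hdfst
      · exact hr2supA w hw
    · intro e he
      simp only [edges_cons, List.mem_cons] at he
      rcases he with rfl | he
      · exact hedA
      · exact hr2edA e he

lemma grow [Finite V] [DecidableEq V] {A : G.Subgraph} (hC : SubConn A) (hD : SubCut A) :
    ∀ (n : ℕ) (K : G.Subgraph), (A.edgeSet \ K.edgeSet).ncard ≤ n → K ≤ A →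
      (∃ a ∈ K.verts, ∃ b ∈ K.verts, a ≠ b) → EarExt G K A := by
  have hSym : Finite (Sym2 V) := by infer_instance
  intro n
  induction n with
  | zero =>
      intro K hcard hKA h2
      by_cases hle : A ≤ K
      · have : K = A := le_antisymm hKA hle
        subst this
        exact EarExt.refl K
      · exfalso
        obtain ⟨u, v, q, hp, hlen, hu, hv, hint, hedge, hsupA, hedA⟩ :=
          exists_ear hC hD hKA h2 hle
        have hq : q.edges ≠ [] := by
          intro hc
          rw [← Walk.length_edges, hc] at hlen
          simp at hlen
        obtain ⟨e0, he0⟩ := List.exists_mem_of_ne_nil _ hq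
        have : e0 ∈ A.edgeSet \ K.edgeSet := ⟨hedA e0 he0, hedge e0 he0⟩
        have hne : (A.edgeSet \ K.edgeSet).Nonempty := ⟨e0, this⟩
        rw [← Set.ncard_pos (Set.toFinite _)] at hne
        omega
  | succ n ih =>
      intro K hcard hKA h2
      by_cases hle : A ≤ K
      · have : K = A := le_antisymm hKA hle
        subst this
        exact EarExt.refl K
      · obtain ⟨u, v, q, hp, hlen, hu, hv, hint, hedge, hsupA, hedA⟩ :=
          exists_ear hC hD hKA h2 hle
        have hstep : EarExt G K (K ⊔ q.toSubgraph) :=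
          EarExt.ear (EarExt.refl K) q hp hlen hu hv hint hedge
        have hq : q.edges ≠ [] := by
          intro hc
          rw [← Walk.length_edges, hc] at hlen
          simp at hlen
        obtain ⟨e0, he0⟩ := List.exists_mem_of_ne_nil _ hq
        have he0AK : e0 ∈ A.edgeSet \ K.edgeSet := ⟨hedA e0 he0, hedge e0 he0⟩
        have hK' : K ⊔ q.toSubgraph ≤ A :=
          sup_le hKA (walk_toSubgraph_le q hsupA hedA)
        refine hstep.trans (ih (K ⊔ q.toSubgraph) ?_ hK' ?_)
        · have hsub : A.edgeSet \ (K ⊔ q.toSubgraph).edgeSet ⊆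
              (A.edgeSet \ K.edgeSet) \ {e0} := by
            intro e he
            rw [Subgraph.edgeSet_sup] at he
            refine ⟨⟨he.1, fun hc => he.2 (Or.inl hc)⟩, fun hc => ?_⟩
            rw [Set.mem_singleton_iff] at hc
            subst hc
            exact he.2 (Or.inr (q.mem_edges_toSubgraph.2 he0))
          have h1 := Set.ncard_le_ncard hsub (Set.toFinite _)
          have h2' := Set.ncard_diff_singleton_lt_of_mem he0AK (Set.toFinite _)
          omega
        · obtain ⟨a, ha, b, hb, hab⟩ := h2
          exact ⟨a, Or.inl ha, b, Or.inl hb, hab⟩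

lemma exists_cycleStart [DecidableEq V] {A : G.Subgraph} (hC : SubConn A) (hD : SubCut A)
    (h3 : 3 ≤ Nat.card A.verts) :
    ∃ C0 : G.Subgraph, IsCycleStart G C0 ∧ C0 ≤ A ∧
      (∃ a ∈ C0.verts, ∃ b ∈ C0.verts, a ≠ b) := by
  have hne : Nonempty A.verts := by
    rcases Nat.card_pos_iff.1 (by omega : 0 < Nat.card A.verts) with ⟨h1, _⟩
    exact h1
  obtain ⟨x0, hx0⟩ := hne
  obtain ⟨y0, hy0, hy0x, -⟩ := exists_mem_notin_pair h3 x0 x0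
  -- first edge : A.Adj u v
  obtain ⟨w, hwsup, hwed⟩ := hC hy0 hx0
  have hADJ : ∃ u v, A.Adj u v := by
    cases w with
    | nil => exact absurd rfl hy0x
    | @cons _ c _ h q => exact ⟨y0, c, Subgraph.mem_edgeSet.1 (hwed s(y0, c) (by simp))⟩
  obtain ⟨u, v, huv⟩ := hADJ
  have huvG : G.Adj u v := huv.adj_sub
  -- v has a neighbour w ≠ u in A
  obtain ⟨z, hzA, hzu, hzv⟩ := exists_mem_notin_pair h3 u v
  obtain ⟨q1, hq1sup, hq1ed, hq1u⟩ := hD u huv.snd_mem hzA huvG.ne' hzu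
  have hwn : ∃ wn, A.Adj v wn ∧ wn ≠ u := by
    cases q1 with
    | nil => exact absurd rfl hzv.symm
    | @cons _ c _ h q =>
        refine ⟨c, Subgraph.mem_edgeSet.1 (hq1ed _ (by simp)), fun hc => ?_⟩
        subst hc
        exact hq1u (by simp)
  obtain ⟨wn, hvwn, hwnu⟩ := hwn
  -- path from u to wn avoiding v
  obtain ⟨q2, hq2sup, hq2ed, hq2v⟩ := hD v huv.fst_mem hvwn.snd_mem huvG.ne hvwn.adj_sub.ne'
  set pth : G.Walk u wn := (q2.toPath : G.Walk u wn)
  have hpthv : v ∉ pth.support := fun hc => hq2v (q2.support_toPath_subset hc)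
  have hwnv : G.Adj wn v := hvwn.adj_sub.symm
  set p : G.Walk u v := pth.concat hwnv with hpdef
  have hpth : pth.IsPath := q2.toPath.2
  have hprev : p.reverse.IsPath := by
    rw [hpdef, Walk.reverse_concat]
    refine (Walk.cons_isPath_iff _ _).2 ⟨hpth.reverse, ?_⟩
    rw [Walk.support_reverse, List.mem_reverse]
    exact hpthv
  have hpIsPath : p.IsPath := (Walk.isPath_reverse_iff p).1 hprev
  have hwnu : wn ≠ u := hwnu
  have hnotmem : s(u, v) ∉ p.edges := by
    rw [hpdef, Walk.edges_concat, List.concat_eq_append]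
    intro hmem
    rcases List.mem_append.1 hmem with hmem | hmem
    · exact hpthv (pth.snd_mem_support_of_mem_edges hmem)
    · rw [List.mem_singleton] at hmem
      simp only [Sym2.eq, Sym2.rel_iff', Prod.mk.injEq, Prod.swap_prod_mk] at hmem
      rcases hmem with ⟨h1, -⟩ | ⟨h1, -⟩
      · exact hwnu h1.symm
      · exact huvG.ne h1
  refine ⟨G.subgraphOfAdj huvG ⊔ p.toSubgraph, ⟨u, v, huvG, p, hpIsPath, hnotmem, rfl⟩, ?_, ?_⟩
  · refine sup_le (SimpleGraph.subgraphOfAdj_le_of_adj A huv) (walk_toSubgraph_le p ?_ ?_)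
    · intro w hw
      rw [hpdef, Walk.support_concat, List.mem_append] at hw
      rcases hw with hw | hw
      · exact hq2sup w (q2.support_toPath_subset hw)
      · rw [List.mem_singleton] at hw; subst hw; exact huv.snd_mem
    · intro e he
      rw [hpdef, Walk.edges_concat, List.concat_eq_append, List.mem_append] at he
      rcases he with he | he
      · exact hq2ed e (q2.edges_toPath_subset he)
      · rw [List.mem_singleton] at he; subst he; exact Subgraph.mem_edgeSet.2 hvwn.symm
  · exact ⟨u, Or.inl (Set.mem_insert _ _), v, Or.inl (by simp), huvG.ne⟩

/-- Any two vertices of `K` distinct from `vs` are joined by a walk in `K` avoiding `vs`. -/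
def Avoid (K : G.Subgraph) : Prop := ∀ (vs : V) ⦃x y : V⦄, x ∈ K.verts → y ∈ K.verts →
  x ≠ vs → y ≠ vs → ∃ p : G.Walk x y, (∀ w ∈ p.support, w ∈ K.verts) ∧ vs ∉ p.support

lemma avoid_cycleStart [DecidableEq V] {u v : V} (h : G.Adj u v) {p : G.Walk u v}
    (hp : p.IsPath) :
    Avoid (G.subgraphOfAdj h ⊔ p.toSubgraph) := by
  intro vs x y hx hy hxv hyv
  have hvertmem : ∀ w, w ∈ (G.subgraphOfAdj h ⊔ p.toSubgraph).verts ↔ w ∈ p.support := by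
    intro w
    rw [Subgraph.verts_sup, Set.mem_union]
    constructor
    · rintro (hw | hw)
      · rcases hw with rfl | hw
        · exact p.start_mem_support
        · rw [Set.mem_singleton_iff] at hw; subst hw; exact p.end_mem_support
      · exact p.mem_verts_toSubgraph.1 hw
    · intro hw; exact Or.inr (p.mem_verts_toSubgraph.2 hw)
  rw [hvertmem] at hx hy
  obtain ⟨e1, he1, rx, hrx, hrxv⟩ := route hp hx hxv
  obtain ⟨e2, he2, ry, hry, hryv⟩ := route hp hy hyv
  obtain ⟨q, hq⟩ := link h he1 he2 rx ry
  refine ⟨q, ?_, ?_⟩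
  · intro w hw
    rw [hvertmem]
    rcases hq w hw with hw1 | hw1
    · exact hrx w hw1
    · exact hry w hw1
  · intro hmem
    rcases hq vs hmem with h1 | h1
    · exact hrxv h1
    · exact hryv h1

lemma avoid_ear [DecidableEq V] {K : G.Subgraph} (hK : Avoid K) {a b : V} (q : G.Walk a b)
    (hq : q.IsPath) (ha : a ∈ K.verts) (hb : b ∈ K.verts) :
    Avoid (K ⊔ q.toSubgraph) := by
  intro vs x y hx hy hxv hyv
  have hreach : ∀ z ∈ (K ⊔ q.toSubgraph).verts, ∀ _ : z ≠ vs, ∃ t, t ∈ K.verts ∧ t ≠ vs ∧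
      ∃ r : G.Walk z t, (∀ w ∈ r.support, w ∈ (K ⊔ q.toSubgraph).verts) ∧ vs ∉ r.support := by
    intro z hz hzv
    rcases hz with hz | hz
    · refine ⟨z, hz, hzv, Walk.nil, ?_, ?_⟩
      · intro w hw
        rw [Walk.support_nil, List.mem_singleton] at hw
        subst hw
        exact Or.inl hz
      · rw [Walk.support_nil, List.mem_singleton]
        exact fun hc => hzv hc.symm
    · have hzs : z ∈ q.support := q.mem_verts_toSubgraph.1 hz
      obtain ⟨e, he, r, hrs, hrv⟩ := route hq hzs hzv
      have heK : e ∈ K.verts := by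
        rcases he with rfl | rfl
        · exact ha
        · exact hb
      refine ⟨e, heK, fun hc => hrv (hc ▸ r.end_mem_support), r, ?_, hrv⟩
      intro w hw
      exact Or.inr (q.mem_verts_toSubgraph.2 (hrs w hw))
  obtain ⟨t1, ht1K, ht1v, r1, hr1s, hr1v⟩ := hreach x hx hxv
  obtain ⟨t2, ht2K, ht2v, r2, hr2s, hr2v⟩ := hreach y hy hyv
  obtain ⟨mid, hmids, hmidv⟩ := hK vs ht1K ht2K ht1v ht2v
  refine ⟨r1.append (mid.append r2.reverse), ?_, ?_⟩
  · intro w hw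
    rw [Walk.mem_support_append_iff, Walk.mem_support_append_iff, Walk.support_reverse,
      List.mem_reverse] at hw
    rcases hw with hw | hw | hw
    · exact hr1s w hw
    · exact Or.inl (hmids w hw)
    · exact hr2s w hw
  · intro hmem
    rw [Walk.mem_support_append_iff, Walk.mem_support_append_iff, Walk.support_reverse,
      List.mem_reverse] at hmem
    rcases hmem with hw | hw | hw
    · exact hr1v hw
    · exact hmidv hw
    · exact hr2v hw

lemma avoid_of_earExt [DecidableEq V] {C0 K : G.Subgraph} (h : EarExt G C0 K)
    (h0 : Avoid C0) : Avoid K := by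
  induction h with
  | refl => exact h0
  | ear _ p hp _ hu hv _ _ ih => exact avoid_ear ih p hp hu hv

lemma finite_verts_of_earExt {C0 K : G.Subgraph} (h : EarExt G C0 K)
    (h0 : C0.verts.Finite) : K.verts.Finite := by
  induction h with
  | refl => exact h0
  | ear _ p _ _ _ _ _ _ ih =>
      rw [Subgraph.verts_sup]
      refine ih.union ?_
      rw [Walk.verts_toSubgraph]
      exact p.support.finite_toSet

lemma path_loop_nil {a : V} {p : G.Walk a a} (hp : p.IsPath) : p = Walk.nil := by
  cases p with
  | nil => rfl
  | cons h1 q =>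
      rw [Walk.cons_isPath_iff] at hp
      exact (hp.2 q.end_mem_support).elim

lemma card_ge_three [Finite V] {u v w1 : V} (huv : u ≠ v) (h1 : w1 ≠ u) (h2 : w1 ≠ v) :
    3 ≤ Nat.card V := by
  have hsub : ({u, v, w1} : Set V) ⊆ Set.univ := Set.subset_univ _
  have hc : ({u, v, w1} : Set V).ncard = 3 := by
    rw [Set.ncard_insert_of_notMem (by simp [huv, h1.symm]) (Set.toFinite _),
      Set.ncard_insert_of_notMem (by simp [h2.symm]) (Set.toFinite _),
      Set.ncard_singleton]
  have := Set.ncard_le_ncard hsub Set.finite_univ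
  rw [hc, Set.ncard_univ] at this
  exact this

theorem dir1 (hex : ∃ C0, IsCycleStart G C0 ∧ EarExt G C0 ⊤) : TwoConnected G := by
  classical
  obtain ⟨C0, ⟨u, v, h, p, hp, hnot, rfl⟩, hext⟩ := hex
  have hfin : (⊤ : G.Subgraph).verts.Finite := by
    refine finite_verts_of_earExt hext ?_
    rw [Subgraph.verts_sup, SimpleGraph.subgraphOfAdj_verts, Walk.verts_toSubgraph]
    exact (Set.toFinite _).union p.support.finite_toSet
  have hfinV : Finite V := by
    rw [Subgraph.verts_top] at hfin
    exact Set.finite_univ_iff.1 hfin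
  have hmid : ∃ w1, w1 ≠ u ∧ w1 ≠ v := by
    cases p with
    | nil => exact absurd rfl h.ne
    | @cons _ c _ h1 q =>
        refine ⟨c, h1.ne', fun hc => ?_⟩
        subst hc
        have hqnil : q = Walk.nil := path_loop_nil ((Walk.cons_isPath_iff _ _).1 hp).1
        refine hnot ?_
        subst hqnil
        simp
  obtain ⟨w1, hw1u, hw1v⟩ := hmid
  have h3 : 3 ≤ Nat.card V := card_ge_three h.ne hw1u hw1v
  have hAvoid : Avoid (⊤ : G.Subgraph) := avoid_of_earExt hext (avoid_cycleStart h hp)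
  refine ⟨h3, ?_, fun v0 => ?_⟩
  · rw [connected_iff]
    refine ⟨?_, ⟨u⟩⟩
    · intro x y
      obtain ⟨z, hzx, hzy⟩ := exists_notin_pair h3 x y
      obtain ⟨p0, -, -⟩ := hAvoid z (Set.mem_univ x) (Set.mem_univ y) hzx.symm hzy.symm
      exact p0.reachable
  · rw [connected_iff]
    constructor
    · intro a b
      obtain ⟨p0, -, hv0⟩ :=
        hAvoid v0 (Set.mem_univ a.1) (Set.mem_univ b.1)
          (fun hc => a.2 (Set.mem_singleton_iff.2 hc)) (fun hc => b.2 (Set.mem_singleton_iff.2 hc))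
      have := reachable_induce_of_walk (s := ({v0}ᶜ : Set V)) p0
        (fun w hw => by
          simp only [Set.mem_compl_iff, Set.mem_singleton_iff]
          rintro rfl
          exact hv0 hw) a.2 b.2
      exact this
    · obtain ⟨z, hz, -⟩ := exists_notin_pair h3 v0 v0
      exact ⟨⟨z, by simp [hz]⟩⟩

theorem dir2 (hG : TwoConnected G) (H : G.Subgraph) (hH : TwoConnected H.coe) :
    ∃ C0, IsCycleStart G C0 ∧ EarExt G C0 H ∧ EarExt G H ⊤ := by
  classical
  have hfinV : Finite V := Nat.finite_of_card_ne_zero (by have := hG.1; omega)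
  have hCH := subConn_of_twoConnected hH
  have hDH := subCut_of_twoConnected hH
  obtain ⟨C0, hcs, hC0H, h2⟩ := exists_cycleStart hCH hDH hH.1
  have e1 : EarExt G C0 H :=
    grow hCH hDH ((H.edgeSet \ C0.edgeSet).ncard) C0 le_rfl hC0H h2
  have h2H : ∃ a ∈ H.verts, ∃ b ∈ H.verts, a ≠ b := by
    obtain ⟨a, ha, b, hb, hab⟩ := h2
    exact ⟨a, Subgraph.verts_mono hC0H ha, b, Subgraph.verts_mono hC0H hb, hab⟩
  have e2 : EarExt G H ⊤ :=
    grow (subConn_top hG) (subCut_top hG) (((⊤ : G.Subgraph).edgeSet \ H.edgeSet).ncard) H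
      le_rfl le_top h2H
  exact ⟨C0, hcs, e1, e2⟩


end EarAux


/-- A graph with an ear decomposition is 2-connected; conversely, a 2-connected graph
has an ear decomposition beginning with an ear decomposition of any given 2-connected
subgraph `H`. -/
theorem stmt_18 {V : Type*} (G : SimpleGraph V) :
    ((∃ C0, IsCycleStart G C0 ∧ EarExt G C0 ⊤) → TwoConnected G) ∧
      (TwoConnected G → ∀ H : G.Subgraph, TwoConnected H.coe →
        ∃ C0, IsCycleStart G C0 ∧ EarExt G C0 H ∧ EarExt G H ⊤) := by
  exact ⟨dir1, dir2⟩
end
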